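/- arXiv:2512.21839 — 10 statements merged into one kernel-verified Lean document; each statement's English description precedes it below -/
import Mathlib

section
/- Inside the fraction field F of the polynomial ring K[a,b,c], the intersection of the K-subalgebra generated by {a, a⁻¹, b, ac−b} with the K-subalgebra generated by {c, c⁻¹, b, ac−b} equals the K-subalgebra generated by {a, b, c} (i.e., the image of K[a,b,c] in F). -/
open MvPolynomial

lemma primeX0 (K : Type*) [Field K] : Prime (X 0 : MvPolynomial (Fin 3) K) := by
  have h : Prime ((MvPolynomial.finSuccEquiv K 2).toRingEquiv.toMulEquiv
      (X 0 : MvPolynomial (Fin 3) K)) := by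
    have : (MvPolynomial.finSuccEquiv K 2).toRingEquiv.toMulEquiv
        (X 0 : MvPolynomial (Fin 3) K) = MvPolynomial.finSuccEquiv K 2 (X 0) := rfl
    rw [this, MvPolynomial.finSuccEquiv_X_zero]
    exact Polynomial.prime_X
  exact (MulEquiv.prime_iff (MvPolynomial.finSuccEquiv K 2).toRingEquiv.toMulEquiv).mp h

lemma X0_not_dvd_X2 (K : Type*) [Field K] :
    ¬ (X 0 : MvPolynomial (Fin 3) K) ∣ X 2 := by
  rintro ⟨q, hq⟩
  have h := congrArg (eval (fun i : Fin 3 => if i = 2 then (1 : K) else 0)) hq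
  simp at h

/-- In the fraction field `F` of `K[a,b,c]`, the intersection of the `K`-subalgebra
generated by `{a, a⁻¹, b, ac−b}` with the `K`-subalgebra generated by `{c, c⁻¹, b, ac−b}`
equals the `K`-subalgebra generated by `{a, b, c}`. -/
theorem stmt0 (K : Type*) [Field K] [IsAlgClosed K] [CharZero K]
    (F : Type*) [Field F] [Algebra (MvPolynomial (Fin 3) K) F]
    [IsFractionRing (MvPolynomial (Fin 3) K) F]
    [Algebra K F] [IsScalarTower K (MvPolynomial (Fin 3) K) F]
    (a b c : F)
    (ha : a = algebraMap (MvPolynomial (Fin 3) K) F (X 0))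
    (hb : b = algebraMap (MvPolynomial (Fin 3) K) F (X 1))
    (hc : c = algebraMap (MvPolynomial (Fin 3) K) F (X 2)) :
    Algebra.adjoin K {a, a⁻¹, b, a * c - b} ⊓
      Algebra.adjoin K {c, c⁻¹, b, a * c - b} =
    Algebra.adjoin K {a, b, c} := by
  set f := algebraMap (MvPolynomial (Fin 3) K) F with hf
  have hinj : Function.Injective f := IsFractionRing.injective _ _
  have ha0 : a ≠ 0 := by
    rw [ha]
    intro h
    exact MvPolynomial.X_ne_zero 0 (hinj (by simpa using h))
  have hc0 : c ≠ 0 := by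
    rw [hc]
    intro h
    exact MvPolynomial.X_ne_zero 2 (hinj (by simpa using h))
  -- every polynomial image lies in adjoin K {a,b,c}
  have hS : ∀ p : MvPolynomial (Fin 3) K, f p ∈ Algebra.adjoin K {a, b, c} := by
    intro p
    induction p using MvPolynomial.induction_on with
    | C k =>
        rw [hf, ← MvPolynomial.algebraMap_eq, ← IsScalarTower.algebraMap_apply]
        exact Subalgebra.algebraMap_mem _ k
    | add p q hp hq => rw [map_add]; exact add_mem hp hq
    | mul_X p i hp =>
        rw [map_mul]
        refine mul_mem hp ?_
        have hxa : f (X 0) ∈ Algebra.adjoin K {a, b, c} := by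
          rw [← ha]; exact Algebra.subset_adjoin (by simp)
        have hxb : f (X 1) ∈ Algebra.adjoin K {a, b, c} := by
          rw [← hb]; exact Algebra.subset_adjoin (by simp)
        have hxc : f (X 2) ∈ Algebra.adjoin K {a, b, c} := by
          rw [← hc]; exact Algebra.subset_adjoin (by simp)
        fin_cases i
        · exact hxa
        · exact hxb
        · exact hxc
  -- every element of adjoin K {a,b,c} is a polynomial image
  have hS' : ∀ x ∈ Algebra.adjoin K {a, b, c}, ∃ p, f p = x := by
    intro x hx
    induction hx using Algebra.adjoin_induction with
    | mem x hx =>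
        rcases hx with h | h | h
        · exact ⟨X 0, by rw [← ha, h]⟩
        · exact ⟨X 1, by rw [← hb, h]⟩
        · rw [Set.mem_singleton_iff] at h; exact ⟨X 2, by rw [← hc, h]⟩
    | algebraMap r =>
        exact ⟨MvPolynomial.C r, by rw [hf, ← MvPolynomial.algebraMap_eq, ← IsScalarTower.algebraMap_apply]⟩
    | add x y hx hy ihx ihy =>
        obtain ⟨p, hp⟩ := ihx; obtain ⟨q, hq⟩ := ihy
        exact ⟨p + q, by rw [map_add, hp, hq]⟩
    | mul x y hx hy ihx ihy =>
        obtain ⟨p, hp⟩ := ihx; obtain ⟨q, hq⟩ := ihy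
        exact ⟨p * q, by rw [map_mul, hp, hq]⟩
  have haA : a ∈ Algebra.adjoin K {a, b, c} := Algebra.subset_adjoin (by simp)
  have hbA : b ∈ Algebra.adjoin K {a, b, c} := Algebra.subset_adjoin (by simp)
  have hcA : c ∈ Algebra.adjoin K {a, b, c} := Algebra.subset_adjoin (by simp)
  -- elements of the first algebra are of the form (polynomial)/aⁿ
  have key_a : ∀ x ∈ Algebra.adjoin K {a, a⁻¹, b, a * c - b},
      ∃ n : ℕ, a ^ n * x ∈ Algebra.adjoin K {a, b, c} := by
    intro x hx
    induction hx using Algebra.adjoin_induction with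
    | mem x hx =>
        rcases hx with h | h | h | h
        · exact ⟨0, by rw [h, pow_zero, one_mul]; exact haA⟩
        · exact ⟨1, by rw [h, pow_one, mul_inv_cancel₀ ha0]; exact one_mem _⟩
        · exact ⟨0, by rw [h, pow_zero, one_mul]; exact hbA⟩
        · rw [Set.mem_singleton_iff] at h
          exact ⟨0, by rw [h, pow_zero, one_mul]; exact sub_mem (mul_mem haA hcA) hbA⟩
    | algebraMap r =>
        exact ⟨0, by rw [pow_zero, one_mul]; exact Subalgebra.algebraMap_mem _ r⟩
    | add x y hx hy ihx ihy =>
        obtain ⟨n, hn⟩ := ihx; obtain ⟨m, hm⟩ := ihy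
        refine ⟨n + m, ?_⟩
        have h1 : a ^ (n + m) * (x + y) = a ^ m * (a ^ n * x) + a ^ n * (a ^ m * y) := by
          ring
        rw [h1]
        exact add_mem (mul_mem (pow_mem haA m) hn) (mul_mem (pow_mem haA n) hm)
    | mul x y hx hy ihx ihy =>
        obtain ⟨n, hn⟩ := ihx; obtain ⟨m, hm⟩ := ihy
        refine ⟨n + m, ?_⟩
        have h1 : a ^ (n + m) * (x * y) = (a ^ n * x) * (a ^ m * y) := by ring
        rw [h1]
        exact mul_mem hn hm
  -- elements of the second algebra are of the form (polynomial)/cᵐ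
  have key_c : ∀ x ∈ Algebra.adjoin K {c, c⁻¹, b, a * c - b},
      ∃ m : ℕ, c ^ m * x ∈ Algebra.adjoin K {a, b, c} := by
    intro x hx
    induction hx using Algebra.adjoin_induction with
    | mem x hx =>
        rcases hx with h | h | h | h
        · exact ⟨0, by rw [h, pow_zero, one_mul]; exact hcA⟩
        · exact ⟨1, by rw [h, pow_one, mul_inv_cancel₀ hc0]; exact one_mem _⟩
        · exact ⟨0, by rw [h, pow_zero, one_mul]; exact hbA⟩
        · rw [Set.mem_singleton_iff] at h
          exact ⟨0, by rw [h, pow_zero, one_mul]; exact sub_mem (mul_mem haA hcA) hbA⟩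
    | algebraMap r =>
        exact ⟨0, by rw [pow_zero, one_mul]; exact Subalgebra.algebraMap_mem _ r⟩
    | add x y hx hy ihx ihy =>
        obtain ⟨n, hn⟩ := ihx; obtain ⟨m, hm⟩ := ihy
        refine ⟨n + m, ?_⟩
        have h1 : c ^ (n + m) * (x + y) = c ^ m * (c ^ n * x) + c ^ n * (c ^ m * y) := by
          ring
        rw [h1]
        exact add_mem (mul_mem (pow_mem hcA m) hn) (mul_mem (pow_mem hcA n) hm)
    | mul x y hx hy ihx ihy =>
        obtain ⟨n, hn⟩ := ihx; obtain ⟨m, hm⟩ := ihy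
        refine ⟨n + m, ?_⟩
        have h1 : c ^ (n + m) * (x * y) = (c ^ n * x) * (c ^ m * y) := by ring
        rw [h1]
        exact mul_mem hn hm
  apply le_antisymm
  · rintro x ⟨hx1, hx2⟩
    obtain ⟨n, hn⟩ := key_a x hx1
    obtain ⟨m, hm⟩ := key_c x hx2
    obtain ⟨p, hp⟩ := hS' _ hn
    obtain ⟨q, hq⟩ := hS' _ hm
    have heq : (X 2 : MvPolynomial (Fin 3) K) ^ m * p = (X 0) ^ n * q := by
      apply hinj
      rw [map_mul, map_mul, map_pow, map_pow, hp, hq, ← ha, ← hc]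
      ring
    have hdvd : (X 0 : MvPolynomial (Fin 3) K) ^ n ∣ p := by
      have h1 : (X 0 : MvPolynomial (Fin 3) K) ^ n ∣ (X 2) ^ m * p := ⟨q, heq⟩
      have h2 : ¬ (X 0 : MvPolynomial (Fin 3) K) ∣ (X 2) ^ m :=
        fun h => X0_not_dvd_X2 K ((primeX0 K).dvd_of_dvd_pow h)
      exact (primeX0 K).pow_dvd_of_dvd_mul_left n h2 h1
    obtain ⟨r, hr⟩ := hdvd
    have h3 : a ^ n * x = a ^ n * f r := by
      rw [← hp, hr, map_mul, map_pow, ← ha]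
    have hx := mul_left_cancel₀ (pow_ne_zero n ha0) h3
    rw [hx]
    exact hS r
  · rw [le_inf_iff]
    constructor
    · apply Algebra.adjoin_le
      rintro x (h | h | h)
      · rw [h]; exact Algebra.subset_adjoin (by simp)
      · rw [h]; exact Algebra.subset_adjoin (by simp)
      · rw [Set.mem_singleton_iff] at h
        rw [h]
        have hc' : c = a⁻¹ * ((a * c - b) + b) := by
          rw [sub_add_cancel, ← mul_assoc, inv_mul_cancel₀ ha0, one_mul]
        have hm : a⁻¹ * ((a * c - b) + b) ∈
            Algebra.adjoin K {a, a⁻¹, b, a * c - b} :=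
          mul_mem (Algebra.subset_adjoin (by simp))
            (add_mem (Algebra.subset_adjoin (by simp)) (Algebra.subset_adjoin (by simp)))
        have := hm; rwa [← hc'] at this
    · apply Algebra.adjoin_le
      rintro x (h | h | h)
      · rw [h]
        have ha' : a = c⁻¹ * ((a * c - b) + b) := by
          rw [sub_add_cancel, mul_comm a c, ← mul_assoc, inv_mul_cancel₀ hc0, one_mul]
        have hm : c⁻¹ * ((a * c - b) + b) ∈
            Algebra.adjoin K {c, c⁻¹, b, a * c - b} :=
          mul_mem (Algebra.subset_adjoin (by simp))
            (add_mem (Algebra.subset_adjoin (by simp)) (Algebra.subset_adjoin (by simp)))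
        have := hm; rwa [← ha'] at this
      · rw [h]; exact Algebra.subset_adjoin (by simp)
      · rw [Set.mem_singleton_iff] at h
        rw [h]; exact Algebra.subset_adjoin (by simp)
end

section
/- Inside the fraction field F of the polynomial ring K[a,b,c], the intersection of the K-subalgebra generated by {a, a⁻¹, b, b⁻¹, ac−b} with the K-subalgebra generated by {c, c⁻¹, b, b⁻¹, ac−b} equals the K-subalgebra generated by {a, b, c, b⁻¹}. -/
open MvPolynomial

private lemma primeX {K : Type*} [Field K] (i : Fin 3) :
    Prime (X i : MvPolynomial (Fin 3) K) := by
  have h0 : Prime (X (0 : Fin 3) : MvPolynomial (Fin 3) K) := by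
    rw [← MulEquiv.prime_iff (MvPolynomial.finSuccEquiv K 2).toMulEquiv]
    have : (MvPolynomial.finSuccEquiv K 2).toMulEquiv (X (0 : Fin 3)) = Polynomial.X := by
      simpa using MvPolynomial.finSuccEquiv_X_zero (R := K) (n := 2)
    rw [this]
    exact Polynomial.prime_X
  rw [← MulEquiv.prime_iff (renameEquiv K (Equiv.swap i (0 : Fin 3))).toMulEquiv]
  have : (renameEquiv K (Equiv.swap i (0 : Fin 3))).toMulEquiv (X i)
      = (X (0 : Fin 3) : MvPolynomial (Fin 3) K) := by
    simp
  rw [this]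
  exact h0

private lemma aux_pow {K F : Type*} [Field K] [Field F] [Algebra K F]
    (S : Subalgebra K F) {p q d : F} (hp : p ∈ S) (hq : q ∈ S) (hd : d ∈ S)
    (hp1 : p * p⁻¹ = 1) (hq1 : q * q⁻¹ = 1) :
    ∀ x ∈ Algebra.adjoin K ({p, p⁻¹, q, q⁻¹, d} : Set F),
      ∃ n : ℕ, x * (p * q) ^ n ∈ S := by
  intro x hx
  induction hx using Algebra.adjoin_induction with
  | mem y hy =>
    rcases hy with rfl | rfl | rfl | rfl | rfl
    · exact ⟨0, by simpa using hp⟩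
    · refine ⟨1, ?_⟩
      have : p⁻¹ * (p * q) ^ 1 = (p * p⁻¹) * q := by ring
      rw [this, hp1, one_mul]; exact hq
    · exact ⟨0, by simpa using hq⟩
    · refine ⟨1, ?_⟩
      have : q⁻¹ * (p * q) ^ 1 = (q * q⁻¹) * p := by ring
      rw [this, hq1, one_mul]; exact hp
    · exact ⟨0, by simpa using hd⟩
  | algebraMap r => exact ⟨0, by simpa using S.algebraMap_mem r⟩
  | add u v hu hv ihu ihv =>
    obtain ⟨n, hn⟩ := ihu
    obtain ⟨m, hm⟩ := ihv
    refine ⟨n + m, ?_⟩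
    have : (u + v) * (p * q) ^ (n + m)
        = (u * (p * q) ^ n) * (p * q) ^ m + (v * (p * q) ^ m) * (p * q) ^ n := by
      rw [pow_add]; ring
    rw [this]
    exact add_mem (mul_mem hn (pow_mem (mul_mem hp hq) m))
      (mul_mem hm (pow_mem (mul_mem hp hq) n))
  | mul u v hu hv ihu ihv =>
    obtain ⟨n, hn⟩ := ihu
    obtain ⟨m, hm⟩ := ihv
    refine ⟨n + m, ?_⟩
    have : (u * v) * (p * q) ^ (n + m)
        = (u * (p * q) ^ n) * (v * (p * q) ^ m) := by
      rw [pow_add]; ring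
    rw [this]
    exact mul_mem hn hm

/-- In the fraction field `F` of `K[a,b,c]`, the intersection of the `K`-subalgebra
generated by `{a, a⁻¹, b, b⁻¹, ac−b}` with the `K`-subalgebra generated by
`{c, c⁻¹, b, b⁻¹, ac−b}` equals the `K`-subalgebra generated by `{a, b, c, b⁻¹}`. -/
theorem stmt1 (K : Type*) [Field K] [IsAlgClosed K] [CharZero K]
    (F : Type*) [Field F] [Algebra (MvPolynomial (Fin 3) K) F]
    [IsFractionRing (MvPolynomial (Fin 3) K) F]
    [Algebra K F] [IsScalarTower K (MvPolynomial (Fin 3) K) F]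
    (a b c : F)
    (ha : a = algebraMap (MvPolynomial (Fin 3) K) F (X 0))
    (hb : b = algebraMap (MvPolynomial (Fin 3) K) F (X 1))
    (hc : c = algebraMap (MvPolynomial (Fin 3) K) F (X 2)) :
    Algebra.adjoin K {a, a⁻¹, b, b⁻¹, a * c - b} ⊓
      Algebra.adjoin K {c, c⁻¹, b, b⁻¹, a * c - b} =
    Algebra.adjoin K {a, b, c, b⁻¹} := by
  set R := MvPolynomial (Fin 3) K with hR
  set φ : R →+* F := algebraMap R F with hφ
  have hinj : Function.Injective φ := IsFractionRing.injective R F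
  have hX0 : (X (0 : Fin 3) : R) ≠ 0 := MvPolynomial.X_ne_zero _
  have ha0 : a ≠ 0 := by
    rw [ha]; intro h
    exact hX0 (hinj (by simpa using h))
  have hb0 : b ≠ 0 := by
    rw [hb]; intro h
    exact MvPolynomial.X_ne_zero (1 : Fin 3) (hinj (by simpa using h))
  have hc0 : c ≠ 0 := by
    rw [hc]; intro h
    exact MvPolynomial.X_ne_zero (2 : Fin 3) (hinj (by simpa using h))
  set S₀ := Algebra.adjoin K ({a, b, c} : Set F) with hS₀
  have haS : a ∈ S₀ := Algebra.subset_adjoin (by simp)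
  have hbS : b ∈ S₀ := Algebra.subset_adjoin (by simp)
  have hcS : c ∈ S₀ := Algebra.subset_adjoin (by simp)
  have hdS : a * c - b ∈ S₀ := sub_mem (mul_mem haS hcS) hbS
  -- every element of S₀ is the image of a polynomial
  have repr : ∀ x ∈ S₀, ∃ P : R, φ P = x := by
    intro x hx
    induction hx using Algebra.adjoin_induction with
    | mem y hy =>
      rcases hy with rfl | rfl | rfl
      · exact ⟨X 0, ha.symm⟩
      · exact ⟨X 1, hb.symm⟩
      · exact ⟨X 2, hc.symm⟩
    | algebraMap r =>
      refine ⟨C r, ?_⟩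
      rw [show (C r : R) = algebraMap K R r from (MvPolynomial.algebraMap_eq K (Fin 3)) ▸ rfl]
      exact (IsScalarTower.algebraMap_apply K R F r).symm
    | add u v hu hv ihu ihv =>
      obtain ⟨P, hP⟩ := ihu; obtain ⟨Q, hQ⟩ := ihv
      exact ⟨P + Q, by rw [map_add, hP, hQ]⟩
    | mul u v hu hv ihu ihv =>
      obtain ⟨P, hP⟩ := ihu; obtain ⟨Q, hQ⟩ := ihv
      exact ⟨P * Q, by rw [map_mul, hP, hQ]⟩
  -- the image of every polynomial lies in S₀
  have mem_S₀ : ∀ P : R, φ P ∈ S₀ := by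
    intro P
    induction P using MvPolynomial.induction_on with
    | C r =>
      have : φ (C r) = algebraMap K F r := by
        rw [show (C r : R) = algebraMap K R r from (MvPolynomial.algebraMap_eq K (Fin 3)) ▸ rfl]
        exact (IsScalarTower.algebraMap_apply K R F r).symm
      rw [this]; exact S₀.algebraMap_mem r
    | add u v ihu ihv => rw [map_add]; exact add_mem ihu ihv
    | mul_X u i ih =>
      rw [map_mul]
      refine mul_mem ih ?_
      refine Algebra.subset_adjoin ?_
      fin_cases i <;> simp [ha, hb, hc]
  apply le_antisymm
  · -- hard direction
    rintro x hx
    obtain ⟨hxA, hxB⟩ := Algebra.mem_inf.mp hx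
    obtain ⟨n, hn⟩ := aux_pow S₀ haS hbS hdS (mul_inv_cancel₀ ha0) (mul_inv_cancel₀ hb0) x hxA
    obtain ⟨k, hk⟩ := aux_pow S₀ hcS hbS hdS (mul_inv_cancel₀ hc0) (mul_inv_cancel₀ hb0) x hxB
    set u := x * b ^ (n + k) with hu
    have hua : u * a ^ n ∈ S₀ := by
      have : u * a ^ n = (x * (a * b) ^ n) * b ^ k := by
        rw [hu, pow_add, mul_pow]; ring
      rw [this]; exact mul_mem hn (pow_mem hbS k)
    have huc : u * c ^ k ∈ S₀ := by
      have : u * c ^ k = (x * (c * b) ^ k) * b ^ n := by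
        rw [hu, pow_add, mul_pow]; ring
      rw [this]; exact mul_mem hk (pow_mem hbS n)
    obtain ⟨P, hP⟩ := repr _ hua
    obtain ⟨Q, hQ⟩ := repr _ huc
    have key : P * (X 2) ^ k = Q * (X 0) ^ n := by
      apply hinj
      rw [map_mul, map_mul, map_pow, map_pow, hP, hQ, ← ha, ← hc]
      ring
    have hnotdvd : ¬ (X (0 : Fin 3) : R) ∣ (X (2 : Fin 3) : R) ^ k := by
      intro h
      have h2 : (X (0 : Fin 3) : R) ∣ (X (2 : Fin 3) : R) := (primeX 0).dvd_of_dvd_pow h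
      obtain ⟨r, hr⟩ := h2
      have := congrArg (MvPolynomial.eval (fun j : Fin 3 => if j = 2 then (1 : K) else 0)) hr
      simp at this
    have hdvd : (X (0 : Fin 3) : R) ^ n ∣ P := by
      refine (primeX 0).pow_dvd_of_dvd_mul_right n hnotdvd ?_
      rw [key]
      exact dvd_mul_left _ _
    obtain ⟨P', hP'⟩ := hdvd
    have huP' : u = φ P' := by
      have h1 : u * a ^ n = φ P' * a ^ n := by
        rw [← hP, hP', map_mul, map_pow, ← ha]; ring
      exact mul_right_cancel₀ (pow_ne_zero n ha0) h1
    have hxeq : x = φ P' * (b⁻¹) ^ (n + k) := by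
      rw [← huP', hu, mul_assoc, ← mul_pow, mul_inv_cancel₀ hb0, one_pow, mul_one]
    rw [hxeq]
    have hS₀le : S₀ ≤ Algebra.adjoin K ({a, b, c, b⁻¹} : Set F) := by
      apply Algebra.adjoin_mono
      intro y hy
      rcases hy with rfl | rfl | rfl <;> simp
    exact mul_mem (hS₀le (mem_S₀ P')) (pow_mem (Algebra.subset_adjoin (by simp)) _)
  · -- easy direction
    apply Algebra.adjoin_le
    intro y hy
    rw [SetLike.mem_coe, Algebra.mem_inf]
    have hcinv : c⁻¹ ∈ Algebra.adjoin K ({c, c⁻¹, b, b⁻¹, a * c - b} : Set F) :=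
      Algebra.subset_adjoin (by simp)
    have hainv : a⁻¹ ∈ Algebra.adjoin K ({a, a⁻¹, b, b⁻¹, a * c - b} : Set F) :=
      Algebra.subset_adjoin (by simp)
    have hdA : a * c - b ∈ Algebra.adjoin K ({a, a⁻¹, b, b⁻¹, a * c - b} : Set F) :=
      Algebra.subset_adjoin (by simp)
    have hdB : a * c - b ∈ Algebra.adjoin K ({c, c⁻¹, b, b⁻¹, a * c - b} : Set F) :=
      Algebra.subset_adjoin (by simp)
    have hbA : b ∈ Algebra.adjoin K ({a, a⁻¹, b, b⁻¹, a * c - b} : Set F) :=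
      Algebra.subset_adjoin (by simp)
    have hbB : b ∈ Algebra.adjoin K ({c, c⁻¹, b, b⁻¹, a * c - b} : Set F) :=
      Algebra.subset_adjoin (by simp)
    rcases hy with hy | hy | hy | hy <;> rw [hy]
    · constructor
      · exact Algebra.subset_adjoin (by simp)
      · have hA : a = (a * c - b + b) * c⁻¹ := by field_simp; ring
        have h2 : (a * c - b + b) * c⁻¹ ∈
            Algebra.adjoin K ({c, c⁻¹, b, b⁻¹, a * c - b} : Set F) :=
          mul_mem (add_mem hdB hbB) hcinv
        rwa [← hA] at h2
    · exact ⟨hbA, hbB⟩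
    · constructor
      · have hC : c = (a * c - b + b) * a⁻¹ := by field_simp; ring
        have h2 : (a * c - b + b) * a⁻¹ ∈
            Algebra.adjoin K ({a, a⁻¹, b, b⁻¹, a * c - b} : Set F) :=
          mul_mem (add_mem hdA hbA) hainv
        rwa [← hC] at h2
      · exact Algebra.subset_adjoin (by simp)
    · constructor
      · exact Algebra.subset_adjoin (by simp)
      · exact Algebra.subset_adjoin (by simp)
end

section
/- Inside the fraction field F of the polynomial ring K[a,b,c], the intersection of the K-subalgebra generated by {a, a⁻¹, b, ac−b, (ac−b)⁻¹} with the K-subalgebra generated by {c, c⁻¹, b, ac−b, (ac−b)⁻¹} equals the K-subalgebra generated by {a, b, c, (ac−b)⁻¹}. -/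
open MvPolynomial

/-- Auxiliary subalgebra: elements `x` such that `s^n * t^m * x` lies in `T`
for some exponents, where `s, t ∈ T`. -/
def auxSub (K F : Type*) [Field K] [Field F] [Algebra K F]
    (T : Subalgebra K F) (s t : F) (hs : s ∈ T) (ht : t ∈ T) : Subalgebra K F where
  carrier := {x | ∃ n m : ℕ, s ^ n * t ^ m * x ∈ T}
  add_mem' := by
    rintro x y ⟨n1, m1, h1⟩ ⟨n2, m2, h2⟩
    refine ⟨n1 + n2, m1 + m2, ?_⟩
    have hx : s ^ (n1 + n2) * t ^ (m1 + m2) * (x + y)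
        = (s ^ n2 * t ^ m2) * (s ^ n1 * t ^ m1 * x)
          + (s ^ n1 * t ^ m1) * (s ^ n2 * t ^ m2 * y) := by ring
    rw [hx]
    exact add_mem (T.mul_mem (T.mul_mem (T.pow_mem hs n2) (T.pow_mem ht m2)) h1)
      (T.mul_mem (T.mul_mem (T.pow_mem hs n1) (T.pow_mem ht m1)) h2)
  mul_mem' := by
    rintro x y ⟨n1, m1, h1⟩ ⟨n2, m2, h2⟩
    refine ⟨n1 + n2, m1 + m2, ?_⟩
    have hx : s ^ (n1 + n2) * t ^ (m1 + m2) * (x * y)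
        = (s ^ n1 * t ^ m1 * x) * (s ^ n2 * t ^ m2 * y) := by ring
    rw [hx]
    exact T.mul_mem h1 h2
  one_mem' := ⟨0, 0, by simpa using T.one_mem⟩
  zero_mem' := ⟨0, 0, by simpa using T.zero_mem⟩
  algebraMap_mem' := fun r => ⟨0, 0, by simpa using T.algebraMap_mem r⟩

/-- In the fraction field `F` of `K[a,b,c]`, the intersection of the `K`-subalgebra
generated by `{a, a⁻¹, b, ac−b, (ac−b)⁻¹}` with the `K`-subalgebra generated by
`{c, c⁻¹, b, ac−b, (ac−b)⁻¹}` equals the `K`-subalgebra generated by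
`{a, b, c, (ac−b)⁻¹}`. -/
theorem stmt2 (K : Type*) [Field K] [IsAlgClosed K] [CharZero K]
    (F : Type*) [Field F] [Algebra (MvPolynomial (Fin 3) K) F]
    [IsFractionRing (MvPolynomial (Fin 3) K) F]
    [Algebra K F] [IsScalarTower K (MvPolynomial (Fin 3) K) F]
    (a b c : F)
    (ha : a = algebraMap (MvPolynomial (Fin 3) K) F (X 0))
    (hb : b = algebraMap (MvPolynomial (Fin 3) K) F (X 1))
    (hc : c = algebraMap (MvPolynomial (Fin 3) K) F (X 2)) :
    Algebra.adjoin K {a, a⁻¹, b, a * c - b, (a * c - b)⁻¹} ⊓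
      Algebra.adjoin K {c, c⁻¹, b, a * c - b, (a * c - b)⁻¹} =
    Algebra.adjoin K {a, b, c, (a * c - b)⁻¹} := by
  have inj : Function.Injective (algebraMap (MvPolynomial (Fin 3) K) F) :=
    IsFractionRing.injective _ _
  have ha0 : a ≠ 0 := by
    rw [ha, map_ne_zero_iff _ inj]; exact X_ne_zero _
  have hc0 : c ≠ 0 := by
    rw [hc, map_ne_zero_iff _ inj]; exact X_ne_zero _
  have hdmap : a * c - b = algebraMap (MvPolynomial (Fin 3) K) F (X 0 * X 2 - X 1) := by
    rw [ha, hb, hc, map_sub, map_mul]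
  have hdpoly : (X 0 * X 2 - X 1 : MvPolynomial (Fin 3) K) ≠ 0 := by
    intro h
    have := congrArg (eval (fun i : Fin 3 => if i = 1 then (1 : K) else 0)) h
    simp at this
  have hd0 : a * c - b ≠ 0 := by
    rw [hdmap, map_ne_zero_iff _ inj]; exact hdpoly
  -- T = adjoin K {a,b,c} = range of the algebra map
  set T : Subalgebra K F := Algebra.adjoin K {a, b, c} with hTdef
  have hTrange : (IsScalarTower.toAlgHom K (MvPolynomial (Fin 3) K) F).range = T := by
    rw [← Algebra.map_top, ← adjoin_range_X, AlgHom.map_adjoin, hTdef]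
    congr 1
    ext x
    constructor
    · rintro ⟨y, ⟨i, rfl⟩, rfl⟩
      fin_cases i
      · exact Or.inl ha.symm
      · exact Or.inr (Or.inl hb.symm)
      · exact Or.inr (Or.inr hc.symm)
    · rintro (rfl | rfl | rfl)
      exacts [⟨X 0, ⟨0, rfl⟩, ha.symm⟩, ⟨X 1, ⟨1, rfl⟩, hb.symm⟩, ⟨X 2, ⟨2, rfl⟩, hc.symm⟩]
  have haT : a ∈ T := Algebra.subset_adjoin (by simp)
  have hbT : b ∈ T := Algebra.subset_adjoin (by simp)
  have hcT : c ∈ T := Algebra.subset_adjoin (by simp)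
  have hdT : a * c - b ∈ T := sub_mem (mul_mem haT hcT) hbT
  -- X 0 is prime
  have hX0prime : Prime (X 0 : MvPolynomial (Fin 3) K) := by
    rw [← MulEquiv.prime_iff (MvPolynomial.finSuccEquiv K 2).toMulEquiv]
    show Prime ((MvPolynomial.finSuccEquiv K 2) (X 0))
    rw [finSuccEquiv_X_zero]
    exact Polynomial.prime_X
  have hX0ndvdX2 : ¬ (X 0 : MvPolynomial (Fin 3) K) ∣ X 2 := by
    rintro ⟨q, hq⟩
    have := congrArg (eval (fun i : Fin 3 => if i = 2 then (1 : K) else 0)) hq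
    simp at this
  apply le_antisymm
  · -- hard direction
    have hAle : Algebra.adjoin K {a, a⁻¹, b, a * c - b, (a * c - b)⁻¹}
        ≤ auxSub K F T a (a * c - b) haT hdT := by
      rw [Algebra.adjoin_le_iff]
      rintro x (rfl | rfl | rfl | rfl | rfl)
      · exact ⟨0, 0, by simpa using haT⟩
      · exact ⟨1, 0, by simpa [mul_inv_cancel₀ ha0] using T.one_mem⟩
      · exact ⟨0, 0, by simpa using hbT⟩
      · exact ⟨0, 0, by simpa using hdT⟩
      · exact ⟨0, 1, by simpa [mul_inv_cancel₀ hd0] using T.one_mem⟩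
    have hBle : Algebra.adjoin K {c, c⁻¹, b, a * c - b, (a * c - b)⁻¹}
        ≤ auxSub K F T c (a * c - b) hcT hdT := by
      rw [Algebra.adjoin_le_iff]
      rintro x (rfl | rfl | rfl | rfl | rfl)
      · exact ⟨0, 0, by simpa using hcT⟩
      · exact ⟨1, 0, by simpa [mul_inv_cancel₀ hc0] using T.one_mem⟩
      · exact ⟨0, 0, by simpa using hbT⟩
      · exact ⟨0, 0, by simpa using hdT⟩
      · exact ⟨0, 1, by simpa [mul_inv_cancel₀ hd0] using T.one_mem⟩
    rintro x ⟨hxA, hxB⟩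
    obtain ⟨n, m, h1⟩ := hAle hxA
    obtain ⟨p, q, h2⟩ := hBle hxB
    -- normalize the power of d
    set d : F := a * c - b with hddef
    have h1' : a ^ n * (d ^ (m + q) * x) ∈ T := by
      have : a ^ n * (d ^ (m + q) * x) = d ^ q * (a ^ n * d ^ m * x) := by ring
      rw [this]; exact T.mul_mem (T.pow_mem hdT q) h1
    have h2' : c ^ p * (d ^ (m + q) * x) ∈ T := by
      have : c ^ p * (d ^ (m + q) * x) = d ^ m * (c ^ p * d ^ q * x) := by ring
      rw [this]; exact T.mul_mem (T.pow_mem hdT m) h2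
    set u : F := d ^ (m + q) * x with hudef
    -- get polynomial representatives
    rw [← hTrange] at h1' h2'
    obtain ⟨f, hf⟩ := h1'
    obtain ⟨g, hg⟩ := h2'
    replace hf : algebraMap (MvPolynomial (Fin 3) K) F f = a ^ n * u := hf
    replace hg : algebraMap (MvPolynomial (Fin 3) K) F g = c ^ p * u := hg
    have hfg : (X 2 : MvPolynomial (Fin 3) K) ^ p * f = X 0 ^ n * g := by
      apply inj
      rw [map_mul, map_mul, map_pow, map_pow, hf, hg, ← ha, ← hc]
      ring
    have hndvd : ¬ (X 0 : MvPolynomial (Fin 3) K) ∣ X 2 ^ p := fun hdd =>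
      hX0ndvdX2 (hX0prime.dvd_of_dvd_pow hdd)
    have hdvd : (X 0 : MvPolynomial (Fin 3) K) ^ n ∣ f :=
      hX0prime.pow_dvd_of_dvd_mul_left n hndvd ⟨g, hfg⟩
    obtain ⟨h, hh⟩ := hdvd
    have huT : u ∈ T := by
      have h1'' : a ^ n * u = a ^ n * algebraMap (MvPolynomial (Fin 3) K) F h := by
        rw [← hf, hh, map_mul, map_pow, ← ha]
      have hu : u = algebraMap (MvPolynomial (Fin 3) K) F h :=
        mul_left_cancel₀ (pow_ne_zero n ha0) h1''
      rw [hu, ← hTrange]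
      exact ⟨h, rfl⟩
    -- conclude
    have hxeq : x = ((a * c - b)⁻¹) ^ (m + q) * u := by
      rw [hudef, ← hddef, inv_pow]
      field_simp
    rw [hxeq]
    refine mul_mem (pow_mem (Algebra.subset_adjoin (by simp [hddef])) _) ?_
    have : T ≤ Algebra.adjoin K {a, b, c, (a * c - b)⁻¹} := by
      rw [hTdef]
      apply Algebra.adjoin_mono
      intro y hy
      rcases hy with rfl | rfl | rfl
      · exact Or.inl rfl
      · exact Or.inr (Or.inl rfl)
      · exact Or.inr (Or.inr (Or.inl rfl))
    exact this huT
  · -- easy direction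
    have hmem1 : a ∈ Algebra.adjoin K {a, a⁻¹, b, a * c - b, (a * c - b)⁻¹} ⊓
        Algebra.adjoin K {c, c⁻¹, b, a * c - b, (a * c - b)⁻¹} := by
      constructor
      · exact Algebra.subset_adjoin (by simp)
      · have key : a = c⁻¹ * ((a * c - b) + b) := by field_simp; ring
        have hmm : c⁻¹ * ((a * c - b) + b)
            ∈ Algebra.adjoin K {c, c⁻¹, b, a * c - b, (a * c - b)⁻¹} :=
          mul_mem (Algebra.subset_adjoin (by simp))
            (add_mem (Algebra.subset_adjoin (by simp)) (Algebra.subset_adjoin (by simp)))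
        rwa [← key] at hmm
    have hmem2 : b ∈ Algebra.adjoin K {a, a⁻¹, b, a * c - b, (a * c - b)⁻¹} ⊓
        Algebra.adjoin K {c, c⁻¹, b, a * c - b, (a * c - b)⁻¹} :=
      ⟨Algebra.subset_adjoin (by simp), Algebra.subset_adjoin (by simp)⟩
    have hmem3 : c ∈ Algebra.adjoin K {a, a⁻¹, b, a * c - b, (a * c - b)⁻¹} ⊓
        Algebra.adjoin K {c, c⁻¹, b, a * c - b, (a * c - b)⁻¹} := by
      constructor
      · have key : c = a⁻¹ * ((a * c - b) + b) := by field_simp; ring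
        have hmm : a⁻¹ * ((a * c - b) + b)
            ∈ Algebra.adjoin K {a, a⁻¹, b, a * c - b, (a * c - b)⁻¹} :=
          mul_mem (Algebra.subset_adjoin (by simp))
            (add_mem (Algebra.subset_adjoin (by simp)) (Algebra.subset_adjoin (by simp)))
        rwa [← key] at hmm
      · exact Algebra.subset_adjoin (by simp)
    have hmem4 : (a * c - b)⁻¹ ∈ Algebra.adjoin K {a, a⁻¹, b, a * c - b, (a * c - b)⁻¹} ⊓
        Algebra.adjoin K {c, c⁻¹, b, a * c - b, (a * c - b)⁻¹} :=
      ⟨Algebra.subset_adjoin (by simp), Algebra.subset_adjoin (by simp)⟩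
    rw [Algebra.adjoin_le_iff]
    rintro x (rfl | rfl | rfl | rfl)
    exacts [hmem1, hmem2, hmem3, hmem4]
end

section
/- For all positive integers a and b, the K-algebra R(a,b) = K[x₁,x₂,x₃,x₄]/(x₁x₃ − 1 − x₂^a, x₂x₄ − 1 − x₁^b) is a smooth K-algebra (of finite presentation and formally smooth). -/
open MvPolynomial

namespace Stmt4Aux

/-- Truncated binomial expansion modulo the square of the increment. -/
lemma pow_aux {R : Type*} [CommRing R] (x y : R) (n : ℕ) :
    ∃ z : R, (x + y) ^ (n + 1) = x ^ (n + 1) + ((n : R) + 1) * x ^ n * y + y ^ 2 * z := by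
  induction n with
  | zero => exact ⟨0, by ring⟩
  | succ n ih =>
    obtain ⟨z, hz⟩ := ih
    refine ⟨z * (x + y) + ((n : R) + 1) * x ^ n, ?_⟩
    have h : (x + y) ^ (n + 1 + 1) = (x + y) ^ (n + 1) * (x + y) := by ring
    rw [h, hz]
    push_cast
    ring

variable (K : Type) [Field K] [CharZero K] (m n : ℕ)

noncomputable section

/-- first relation -/
def f : MvPolynomial (Fin 4) K := X 0 * X 2 - 1 - X 1 ^ (m + 1)

/-- second relation -/
def g : MvPolynomial (Fin 4) K := X 1 * X 3 - 1 - X 0 ^ (n + 1)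

/-- the ideal of relations -/
def Iab : Ideal (MvPolynomial (Fin 4) K) := Ideal.span {f K m, g K n}

/-- the constant `1/(ab)` -/
def u : MvPolynomial (Fin 4) K := C ((((m : K) + 1) * ((n : K) + 1))⁻¹)

/-- the constant `a` -/
def al : MvPolynomial (Fin 4) K := (m : MvPolynomial (Fin 4) K) + 1

/-- the constant `b` -/
def be : MvPolynomial (Fin 4) K := (n : MvPolynomial (Fin 4) K) + 1

/-- Newton correction for `x₁` -/
def d1 : MvPolynomial (Fin 4) K :=
  u K m n * (((1 + X 0 ^ n * X 0) * X 0) * f K m + (-(al K m * X 0)) * g K n)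

/-- Newton correction for `x₂` -/
def d2 : MvPolynomial (Fin 4) K :=
  u K m n * ((-(be K n * X 1)) * f K m + ((1 + X 1 ^ m * X 1) * X 1) * g K n)

/-- Newton correction for `x₃` -/
def d3 : MvPolynomial (Fin 4) K :=
  u K m n * ((-(al K m * be K n * X 2 + X 1 * X 2 * X 3)) * f K m +
    ((1 + X 1 ^ m * X 1) * (al K m * X 2)) * g K n)

/-- Newton correction for `x₄` -/
def d4 : MvPolynomial (Fin 4) K :=
  u K m n * (((1 + X 0 ^ n * X 0) * (be K n * X 3)) * f K m +
    (-(al K m * be K n * X 3 + X 0 * X 2 * X 3)) * g K n)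

/-- corrected generators -/
def F1 : MvPolynomial (Fin 4) K := X 0 + d1 K m n
def F2 : MvPolynomial (Fin 4) K := X 1 + d2 K m n
def F3 : MvPolynomial (Fin 4) K := X 2 + d3 K m n
def F4 : MvPolynomial (Fin 4) K := X 3 + d4 K m n

lemma hu : u K m n * (al K m * be K n) = 1 := by
  have h : al K m * be K n = (C (((m : K) + 1) * ((n : K) + 1)) : MvPolynomial (Fin 4) K) := by
    simp only [al, be, map_mul, map_add, map_one, map_natCast]
  rw [h, u, ← C_mul, inv_mul_cancel₀
    (mul_ne_zero (Nat.cast_add_one_ne_zero m) (Nat.cast_add_one_ne_zero n)), C_1]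

lemma hfI : f K m ∈ Iab K m n := Ideal.subset_span (Set.mem_insert _ _)

lemma hgI : g K n ∈ Iab K m n := Ideal.subset_span (Set.mem_insert_of_mem _ rfl)

lemma hd1I : d1 K m n ∈ Iab K m n := by
  unfold d1
  exact Ideal.mul_mem_left _ _ (add_mem (Ideal.mul_mem_left _ _ (hfI K m n))
    (Ideal.mul_mem_left _ _ (hgI K m n)))

lemma hd2I : d2 K m n ∈ Iab K m n := by
  unfold d2
  exact Ideal.mul_mem_left _ _ (add_mem (Ideal.mul_mem_left _ _ (hfI K m n))
    (Ideal.mul_mem_left _ _ (hgI K m n)))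

lemma hd3I : d3 K m n ∈ Iab K m n := by
  unfold d3
  exact Ideal.mul_mem_left _ _ (add_mem (Ideal.mul_mem_left _ _ (hfI K m n))
    (Ideal.mul_mem_left _ _ (hgI K m n)))

lemma hd4I : d4 K m n ∈ Iab K m n := by
  unfold d4
  exact Ideal.mul_mem_left _ _ (add_mem (Ideal.mul_mem_left _ _ (hfI K m n))
    (Ideal.mul_mem_left _ _ (hgI K m n)))

lemma mem1 : F1 K m n * F3 K m n - 1 - F2 K m n ^ (m + 1) ∈ Iab K m n ^ 2 := by
  obtain ⟨z, hz⟩ := pow_aux (X 1 : MvPolynomial (Fin 4) K) (d2 K m n) m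
  have key : F1 K m n * F3 K m n - 1 - F2 K m n ^ (m + 1) =
      f K m * (u K m n * ((1 - al K m * be K n - X 1 * X 3 + X 0 ^ n * X 0) * f K m) +
        u K m n * ((-1 - X 1 ^ m * X 1) * g K n) +
        u K m n * ((al K m * (X 1 ^ m) * X 1) * g K n)) +
      d1 K m n * d3 K m n + d2 K m n * (-(d2 K m n * z)) := by
    have hu' := hu K m n
    simp only [u, al, be] at hu'
    simp only [F1, F2, F3, d1, d2, d3, f, g, u, al, be] at hz ⊢
    linear_combination (-1 : MvPolynomial (Fin 4) K) * hz -
      (X 0 * X 2 - 1 - X 1 ^ (m + 1)) * hu'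
  rw [key, pow_two]
  refine add_mem (add_mem (Ideal.mul_mem_mul (hfI K m n) ?_)
    (Ideal.mul_mem_mul (hd1I K m n) (hd3I K m n)))
    (Ideal.mul_mem_mul (hd2I K m n) (neg_mem (Ideal.mul_mem_right _ _ (hd2I K m n))))
  exact add_mem (add_mem (Ideal.mul_mem_left _ _ (Ideal.mul_mem_left _ _ (hfI K m n)))
    (Ideal.mul_mem_left _ _ (Ideal.mul_mem_left _ _ (hgI K m n))))
    (Ideal.mul_mem_left _ _ (Ideal.mul_mem_left _ _ (hgI K m n)))

lemma mem2 : F2 K m n * F4 K m n - 1 - F1 K m n ^ (n + 1) ∈ Iab K m n ^ 2 := by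
  obtain ⟨z, hz⟩ := pow_aux (X 0 : MvPolynomial (Fin 4) K) (d1 K m n) n
  have key : F2 K m n * F4 K m n - 1 - F1 K m n ^ (n + 1) =
      g K n * (u K m n * ((-(al K m * be K n)) * g K n) +
        u K m n * ((-(X 1 * X 3)) * f K m) +
        u K m n * ((be K n * (X 0 ^ n) * X 0) * f K m)) +
      d2 K m n * d4 K m n + d1 K m n * (-(d1 K m n * z)) := by
    have hu' := hu K m n
    simp only [u, al, be] at hu'
    simp only [F1, F2, F4, d1, d2, d4, f, g, u, al, be] at hz ⊢
    linear_combination (-1 : MvPolynomial (Fin 4) K) * hz -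
      (X 1 * X 3 - 1 - X 0 ^ (n + 1)) * hu'
  rw [key, pow_two]
  refine add_mem (add_mem (Ideal.mul_mem_mul (hgI K m n) ?_)
    (Ideal.mul_mem_mul (hd2I K m n) (hd4I K m n)))
    (Ideal.mul_mem_mul (hd1I K m n) (neg_mem (Ideal.mul_mem_right _ _ (hd1I K m n))))
  exact add_mem (add_mem (Ideal.mul_mem_left _ _ (Ideal.mul_mem_left _ _ (hgI K m n)))
    (Ideal.mul_mem_left _ _ (Ideal.mul_mem_left _ _ (hfI K m n))))
    (Ideal.mul_mem_left _ _ (Ideal.mul_mem_left _ _ (hfI K m n)))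

/-- the section of the square-zero thickening, on polynomial generators -/
def φ : MvPolynomial (Fin 4) K →ₐ[K] (MvPolynomial (Fin 4) K ⧸ Iab K m n ^ 2) :=
  aeval ![Ideal.Quotient.mk _ (F1 K m n), Ideal.Quotient.mk _ (F2 K m n),
    Ideal.Quotient.mk _ (F3 K m n), Ideal.Quotient.mk _ (F4 K m n)]

lemma hφ : ∀ p ∈ Iab K m n, φ K m n p = 0 := by
  have hle : Iab K m n ≤ RingHom.ker (φ K m n) := by
    unfold Iab
    rw [Ideal.span_le]
    rintro x hx
    rcases hx with rfl | hx
    · show φ K m n (f K m) = 0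
      simp only [φ, f, map_sub, map_mul, map_one, map_pow, aeval_X,
        Matrix.cons_val_zero, Matrix.cons_val_one, Matrix.head_cons,
        Matrix.cons_val_two, Matrix.tail_cons]
      rw [← map_mul, ← map_pow, ← map_one (Ideal.Quotient.mk (Iab K m n ^ 2)),
        ← map_sub, ← map_sub, Ideal.Quotient.eq_zero_iff_mem]
      exact mem1 K m n
    · rcases hx with rfl
      show φ K m n (g K n) = 0
      simp only [φ, g, map_sub, map_mul, map_one, map_pow, aeval_X,
        Matrix.cons_val_zero, Matrix.cons_val_one, Matrix.head_cons,
        Matrix.cons_val_three, Matrix.tail_cons]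
      rw [← map_mul, ← map_pow, ← map_one (Ideal.Quotient.mk (Iab K m n ^ 2)),
        ← map_sub, ← map_sub, Ideal.Quotient.eq_zero_iff_mem]
      exact mem2 K m n
  exact fun p hp => hle hp

lemma formallySmooth : Algebra.FormallySmooth K (MvPolynomial (Fin 4) K ⧸ Iab K m n) := by
  have hker : RingHom.ker (Ideal.Quotient.mkₐ K (Iab K m n)).toRingHom = Iab K m n :=
    Ideal.Quotient.mkₐ_ker K _
  have hker2 : Iab K m n ^ 2 =
      RingHom.ker (Ideal.Quotient.mkₐ K (Iab K m n)).toRingHom ^ 2 := by rw [hker]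
  refine Algebra.FormallySmooth.of_split (Ideal.Quotient.mkₐ K (Iab K m n))
    ((Ideal.quotientEquivAlgOfEq K hker2).toAlgHom.comp
      (Ideal.Quotient.liftₐ (Iab K m n) (φ K m n) (hφ K m n))) ?_
  apply Ideal.Quotient.algHom_ext
  apply MvPolynomial.algHom_ext
  intro i
  simp only [AlgHom.comp_apply, Ideal.Quotient.mkₐ_eq_mk, AlgHom.id_apply]
  rw [Ideal.Quotient.liftₐ_apply]
  fin_cases i
  · show (Ideal.Quotient.mkₐ K (Iab K m n)).kerSquareLift
      ((Ideal.quotientEquivAlgOfEq K hker2).toAlgHom (φ K m n (X 0))) = _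
    simp only [φ, aeval_X, Matrix.cons_val_zero, AlgEquiv.toAlgHom_eq_coe, AlgHom.coe_coe,
      Ideal.quotientEquivAlgOfEq_mk]
    show Ideal.Quotient.mk (Iab K m n) (F1 K m n) = Ideal.Quotient.mk (Iab K m n) (X 0)
    rw [Ideal.Quotient.mk_eq_mk_iff_sub_mem]
    simpa [F1] using hd1I K m n
  · show (Ideal.Quotient.mkₐ K (Iab K m n)).kerSquareLift
      ((Ideal.quotientEquivAlgOfEq K hker2).toAlgHom (φ K m n (X 1))) = _
    simp only [φ, aeval_X, Matrix.cons_val_one, Matrix.head_cons,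
      AlgEquiv.toAlgHom_eq_coe, AlgHom.coe_coe, Ideal.quotientEquivAlgOfEq_mk]
    show Ideal.Quotient.mk (Iab K m n) (F2 K m n) = Ideal.Quotient.mk (Iab K m n) (X 1)
    rw [Ideal.Quotient.mk_eq_mk_iff_sub_mem]
    simpa [F2] using hd2I K m n
  · show (Ideal.Quotient.mkₐ K (Iab K m n)).kerSquareLift
      ((Ideal.quotientEquivAlgOfEq K hker2).toAlgHom (φ K m n (X 2))) = _
    simp only [φ, aeval_X, Matrix.cons_val_two, Matrix.tail_cons, Matrix.head_cons,
      AlgEquiv.toAlgHom_eq_coe, AlgHom.coe_coe, Ideal.quotientEquivAlgOfEq_mk]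
    show Ideal.Quotient.mk (Iab K m n) (F3 K m n) = Ideal.Quotient.mk (Iab K m n) (X 2)
    rw [Ideal.Quotient.mk_eq_mk_iff_sub_mem]
    simpa [F3] using hd3I K m n
  · show (Ideal.Quotient.mkₐ K (Iab K m n)).kerSquareLift
      ((Ideal.quotientEquivAlgOfEq K hker2).toAlgHom (φ K m n (X 3))) = _
    simp only [φ, aeval_X, Matrix.cons_val_three, Matrix.tail_cons, Matrix.head_cons,
      AlgEquiv.toAlgHom_eq_coe, AlgHom.coe_coe, Ideal.quotientEquivAlgOfEq_mk]
    show Ideal.Quotient.mk (Iab K m n) (F4 K m n) = Ideal.Quotient.mk (Iab K m n) (X 3)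
    rw [Ideal.Quotient.mk_eq_mk_iff_sub_mem]
    simpa [F4] using hd4I K m n

end

end Stmt4Aux

/-- For all positive integers `a` and `b`, the `K`-algebra
`R(a,b) = K[x₁,x₂,x₃,x₄]/(x₁x₃ − 1 − x₂^a, x₂x₄ − 1 − x₁^b)` is a smooth `K`-algebra
(of finite presentation and formally smooth). -/
theorem stmt4 (K : Type) [Field K] [IsAlgClosed K] [CharZero K]
    (a b : ℕ) (ha : 0 < a) (hb : 0 < b) :
    Algebra.Smooth K
      (MvPolynomial (Fin 4) K ⧸
        Ideal.span ({X 0 * X 2 - 1 - X 1 ^ a, X 1 * X 3 - 1 - X 0 ^ b} :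
          Set (MvPolynomial (Fin 4) K))) := by
  obtain ⟨m, rfl⟩ : ∃ m, a = m + 1 := ⟨a - 1, (Nat.succ_pred_eq_of_pos ha).symm⟩
  obtain ⟨n, rfl⟩ : ∃ n, b = n + 1 := ⟨b - 1, (Nat.succ_pred_eq_of_pos hb).symm⟩
  show Algebra.Smooth K (MvPolynomial (Fin 4) K ⧸ Stmt4Aux.Iab K m n)
  refine ⟨Stmt4Aux.formallySmooth K m n, ?_⟩
  exact Algebra.FinitePresentation.quotient
    (Submodule.fg_span (Set.Finite.insert _ (Set.finite_singleton _)))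
end

section
/- Let F be the fraction field of the polynomial ring K[x,y], and let ψ : K[x₁,x₂,x₃,x₄] → F be the K-algebra homomorphism determined by x₁ ↦ x, x₂ ↦ y, x₃ ↦ (1 + y^a)/x, x₄ ↦ (1 + x^b)/y. Then the kernel of ψ equals the ideal generated by x₁x₃ − 1 − x₂^a and x₂x₄ − 1 − x₁^b. -/
open MvPolynomial

section AuxiliaryLemmas


theorem main_ker {R S : Type*} [CommRing R] [CommRing S] (φ : R →+* S) (J : Ideal R)
    (x f : R) (v : S) (hv : v * φ x = φ f) (hker : RingHom.ker φ = J)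
    (hprime : (J ⊔ Ideal.span {x}).IsPrime) (hf : f ∉ J ⊔ Ideal.span {x}) :
    RingHom.ker (Polynomial.eval₂RingHom φ v) =
      J.map Polynomial.C ⊔ Ideal.span {Polynomial.C x * Polynomial.X - Polynomial.C f} := by
  apply le_antisymm
  · -- hard direction
    have key : ∀ n (p : Polynomial R), Polynomial.eval₂ φ v p = 0 → p.natDegree ≤ n →
        p ∈ J.map Polynomial.C ⊔ Ideal.span {Polynomial.C x * Polynomial.X - Polynomial.C f} := by
      intro n
      induction n with
      | zero =>
        intro p hp hdeg
        have h0 : p = Polynomial.C (p.coeff 0) := Polynomial.eq_C_of_natDegree_le_zero hdeg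
        have hc : p.coeff 0 ∈ J := by
          rw [← hker, RingHom.mem_ker]
          rw [h0, Polynomial.eval₂_C] at hp
          exact hp
        rw [h0]
        exact Ideal.mem_sup_left (Ideal.mem_map_of_mem _ hc)
      | succ n ih =>
        intro p hp hdeg
        set q : R := ∑ i ∈ Finset.range (n + 2), p.coeff i * (f ^ i * x ^ (n + 1 - i)) with hqdef
        have hφq : φ q = 0 := by
          have hsum : Polynomial.eval₂ φ v p
              = ∑ i ∈ Finset.range (n + 2), φ (p.coeff i) * v ^ i :=
            Polynomial.eval₂_eq_sum_range' φ (Nat.lt_succ_of_le hdeg) v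
          have hq : φ q = φ x ^ (n + 1) * Polynomial.eval₂ φ v p := by
            rw [hqdef, map_sum, hsum, Finset.mul_sum]
            refine Finset.sum_congr rfl ?_
            intro i hi
            have hiN : i ≤ n + 1 := Nat.lt_succ_iff.mp (Finset.mem_range.mp hi)
            have h1 : φ x ^ (n + 1) = φ x ^ i * φ x ^ (n + 1 - i) := by
              rw [← pow_add, Nat.add_sub_cancel' hiN]
            have h2 : v ^ i * φ x ^ i = φ f ^ i := by rw [← mul_pow, hv]
            rw [map_mul, map_mul, map_pow, map_pow, h1]
            calc φ (p.coeff i) * (φ f ^ i * φ x ^ (n + 1 - i))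
                = φ (p.coeff i) * ((v ^ i * φ x ^ i) * φ x ^ (n + 1 - i)) := by rw [h2]
              _ = φ x ^ i * φ x ^ (n + 1 - i) * (φ (p.coeff i) * v ^ i) := by ring
          rw [hq, hp, mul_zero]
        have hqJ : q ∈ J := by rw [← hker]; exact RingHom.mem_ker.mpr hφq
        have hdvd : x ∣ q - p.coeff (n + 1) * f ^ (n + 1) := by
          have hq2 : q = (∑ i ∈ Finset.range (n + 1), p.coeff i * (f ^ i * x ^ (n + 1 - i)))
              + p.coeff (n + 1) * f ^ (n + 1) := by
            rw [hqdef, Finset.sum_range_succ, Nat.sub_self, pow_zero, mul_one]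
          rw [hq2, add_sub_cancel_right]
          apply Finset.dvd_sum
          intro i hi
          have hxi : x ∣ x ^ (n + 1 - i) :=
            dvd_pow_self x (Nat.sub_ne_zero_of_lt (Finset.mem_range.mp hi))
          exact Dvd.dvd.mul_left (Dvd.dvd.mul_left hxi _) _
        have hcNP : p.coeff (n + 1) ∈ J ⊔ Ideal.span {x} := by
          have hqP : q ∈ J ⊔ Ideal.span {x} := Ideal.mem_sup_left hqJ
          have hsubP : q - p.coeff (n + 1) * f ^ (n + 1) ∈ J ⊔ Ideal.span {x} :=
            Ideal.mem_sup_right (Ideal.mem_span_singleton.mpr hdvd)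
          have hmul : p.coeff (n + 1) * f ^ (n + 1) ∈ J ⊔ Ideal.span {x} := by
            have := Ideal.sub_mem _ hqP hsubP
            simpa using this
          rcases hprime.mem_or_mem hmul with h | h
          · exact h
          · exact absurd (hprime.mem_of_pow_mem _ h) hf
        obtain ⟨j, hj, z, hz, hjz⟩ := Submodule.mem_sup.mp hcNP
        obtain ⟨c, hc⟩ := Ideal.mem_span_singleton'.mp hz
        set w : Polynomial R := Polynomial.C j * Polynomial.X ^ (n + 1)
          + (Polynomial.C c * Polynomial.X ^ n) * (Polynomial.C x * Polynomial.X - Polynomial.C f)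
          with hw
        have hw2 : w = Polynomial.C j * Polynomial.X ^ (n + 1)
            + Polynomial.C (c * x) * Polynomial.X ^ (n + 1)
            - Polynomial.C (c * f) * Polynomial.X ^ n := by
          rw [hw, map_mul, map_mul]; ring
        have hwmem : w ∈ J.map Polynomial.C
            ⊔ Ideal.span {Polynomial.C x * Polynomial.X - Polynomial.C f} := by
          apply Ideal.add_mem
          · exact Ideal.mem_sup_left (Ideal.mul_mem_right _ _ (Ideal.mem_map_of_mem _ hj))
          · exact Ideal.mem_sup_right
              (Ideal.mul_mem_left _ _ (Ideal.subset_span (Set.mem_singleton _)))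
        have hjz0 : φ j = 0 := by
          have : j ∈ RingHom.ker φ := hker ▸ hj
          exact RingHom.mem_ker.mp this
        have hweval : Polynomial.eval₂ φ v w = 0 := by
          rw [hw]
          simp only [Polynomial.eval₂_add, Polynomial.eval₂_mul, Polynomial.eval₂_sub,
            Polynomial.eval₂_pow, Polynomial.eval₂_C, Polynomial.eval₂_X, hjz0]
          rw [mul_comm (φ x) v, hv]
          ring
        have hwcoeff : ∀ m, n < m → (p - w).coeff m = 0 := by
          intro m hm
          have hNm : n + 1 ≤ m := hm
          rw [Polynomial.coeff_sub, hw2]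
          rcases eq_or_lt_of_le hNm with hEq | hGt
          · rw [← hEq]
            simp only [Polynomial.coeff_sub, Polynomial.coeff_add, Polynomial.coeff_C_mul,
              Polynomial.coeff_X_pow, if_pos rfl]
            rw [if_neg (by omega : ¬ n + 1 = n)]
            have : j + c * x = p.coeff (n + 1) := by rw [hc]; exact hjz
            rw [← this]; simp
          · have hp0 : p.coeff m = 0 :=
              Polynomial.coeff_eq_zero_of_natDegree_lt (lt_of_le_of_lt hdeg hGt)
            simp only [hp0, Polynomial.coeff_sub, Polynomial.coeff_add, Polynomial.coeff_C_mul,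
              Polynomial.coeff_X_pow]
            rw [if_neg (by omega : ¬ m = n + 1), if_neg (by omega : ¬ m = n)]
            ring
        have hdeg' : (p - w).natDegree ≤ n := Polynomial.natDegree_le_iff_coeff_eq_zero.mpr hwcoeff
        have heval' : Polynomial.eval₂ φ v (p - w) = 0 := by
          rw [Polynomial.eval₂_sub, hp, hweval, sub_zero]
        have hmem := ih (p - w) heval' hdeg'
        have hpw : p = (p - w) + w := by ring
        rw [hpw]
        exact Ideal.add_mem _ hmem hwmem
    intro p hp
    exact key p.natDegree p (by rwa [RingHom.mem_ker, Polynomial.coe_eval₂RingHom] at hp) le_rfl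
  · apply sup_le
    · rw [Ideal.map_le_iff_le_comap]
      intro j hj
      have hj0 : φ j = 0 := RingHom.mem_ker.mp (hker ▸ hj)
      simp [Ideal.mem_comap, RingHom.mem_ker, Polynomial.coe_eval₂RingHom, hj0]
    · rw [Ideal.span_le]
      intro g hg
      rw [Set.mem_singleton_iff] at hg
      subst hg
      have : Polynomial.eval₂ φ v (Polynomial.C x * Polynomial.X - Polynomial.C f) = 0 := by
        simp only [Polynomial.eval₂_sub, Polynomial.eval₂_mul, Polynomial.eval₂_C,
          Polynomial.eval₂_X]
        rw [mul_comm (φ x) v, hv, sub_self]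
      simpa [RingHom.mem_ker, Polynomial.coe_eval₂RingHom] using this


noncomputable def ev1 (K : Type*) [CommSemiring K] :
    MvPolynomial (Fin 2) K →ₐ[K] Polynomial K :=
  aeval ![Polynomial.X, 0]

noncomputable def ev0 (K : Type*) [CommSemiring K] :
    MvPolynomial (Fin 2) K →ₐ[K] Polynomial K :=
  aeval ![0, Polynomial.X]

theorem claim1 (K : Type*) [CommRing K] (p : MvPolynomial (Fin 2) K) :
    p - Polynomial.aeval (X 0 : MvPolynomial (Fin 2) K) (ev1 K p)
      ∈ Ideal.span ({X 1} : Set (MvPolynomial (Fin 2) K)) := by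
  induction p using MvPolynomial.induction_on with
  | C a => simp [ev1]
  | add p q hp hq =>
    rw [map_add, map_add, add_sub_add_comm]
    exact Ideal.add_mem _ hp hq
  | mul_X p i hp =>
    fin_cases i
    · show p * X 0 - Polynomial.aeval (X 0 : MvPolynomial (Fin 2) K) (ev1 K (p * X 0))
          ∈ Ideal.span ({X 1} : Set (MvPolynomial (Fin 2) K))
      have h : p * X 0 - Polynomial.aeval (X 0 : MvPolynomial (Fin 2) K) (ev1 K (p * X 0))
          = (p - Polynomial.aeval (X 0 : MvPolynomial (Fin 2) K) (ev1 K p)) * X 0 := by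
        simp only [ev1, map_mul, aeval_X, Matrix.cons_val_zero, Polynomial.aeval_X]
        ring
      rw [h]
      exact Ideal.mul_mem_right _ _ hp
    · show p * X 1 - Polynomial.aeval (X 0 : MvPolynomial (Fin 2) K) (ev1 K (p * X 1))
          ∈ Ideal.span ({X 1} : Set (MvPolynomial (Fin 2) K))
      have h : ev1 K (p * X 1) = 0 := by
        simp [ev1]
      rw [h, map_zero, sub_zero]
      exact Ideal.mul_mem_left _ _ (Ideal.subset_span (Set.mem_singleton _))

theorem claim0 (K : Type*) [CommRing K] (p : MvPolynomial (Fin 2) K) :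
    p - Polynomial.aeval (X 1 : MvPolynomial (Fin 2) K) (ev0 K p)
      ∈ Ideal.span ({X 0} : Set (MvPolynomial (Fin 2) K)) := by
  induction p using MvPolynomial.induction_on with
  | C a => simp [ev0]
  | add p q hp hq =>
    rw [map_add, map_add, add_sub_add_comm]
    exact Ideal.add_mem _ hp hq
  | mul_X p i hp =>
    fin_cases i
    · show p * X 0 - Polynomial.aeval (X 1 : MvPolynomial (Fin 2) K) (ev0 K (p * X 0))
          ∈ Ideal.span ({X 0} : Set (MvPolynomial (Fin 2) K))
      have h : ev0 K (p * X 0) = 0 := by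
        simp [ev0]
      rw [h, map_zero, sub_zero]
      exact Ideal.mul_mem_left _ _ (Ideal.subset_span (Set.mem_singleton _))
    · show p * X 1 - Polynomial.aeval (X 1 : MvPolynomial (Fin 2) K) (ev0 K (p * X 1))
          ∈ Ideal.span ({X 0} : Set (MvPolynomial (Fin 2) K))
      have h : p * X 1 - Polynomial.aeval (X 1 : MvPolynomial (Fin 2) K) (ev0 K (p * X 1))
          = (p - Polynomial.aeval (X 1 : MvPolynomial (Fin 2) K) (ev0 K p)) * X 1 := by
        simp only [ev0, map_mul, aeval_X, Matrix.cons_val_one, Matrix.head_cons,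
          Matrix.cons_val_zero, Polynomial.aeval_X]
        ring
      rw [h]
      exact Ideal.mul_mem_right _ _ hp

theorem ker_ev1 (K : Type*) [CommRing K] :
    RingHom.ker (ev1 K).toRingHom = Ideal.span ({X 1} : Set (MvPolynomial (Fin 2) K)) := by
  apply le_antisymm
  · intro p hp
    have h := claim1 K p
    have h0 : ev1 K p = 0 := RingHom.mem_ker.mp hp
    rwa [h0, map_zero, sub_zero] at h
  · rw [Ideal.span_le]
    intro g hg
    rw [Set.mem_singleton_iff] at hg
    subst hg
    simp [RingHom.mem_ker, ev1]

theorem ker_ev0 (K : Type*) [CommRing K] :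
    RingHom.ker (ev0 K).toRingHom = Ideal.span ({X 0} : Set (MvPolynomial (Fin 2) K)) := by
  apply le_antisymm
  · intro p hp
    have h := claim0 K p
    have h0 : ev0 K p = 0 := RingHom.mem_ker.mp hp
    rwa [h0, map_zero, sub_zero] at h
  · rw [Ideal.span_le]
    intro g hg
    rw [Set.mem_singleton_iff] at hg
    subst hg
    simp [RingHom.mem_ker, ev0]

theorem claimcc (K : Type*) [CommRing K] (p : MvPolynomial (Fin 2) K) :
    p - C (constantCoeff p) ∈ Ideal.span ({X 0, X 1} : Set (MvPolynomial (Fin 2) K)) := by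
  induction p using MvPolynomial.induction_on with
  | C a => simp
  | add p q hp hq =>
    rw [map_add, map_add, add_sub_add_comm]
    exact Ideal.add_mem _ hp hq
  | mul_X p i hp =>
    have hXi : (X i : MvPolynomial (Fin 2) K) ∈ Ideal.span ({X 0, X 1} : Set _) := by
      fin_cases i
      · exact Ideal.subset_span (Set.mem_insert _ _)
      · exact Ideal.subset_span (Set.mem_insert_of_mem _ rfl)
    rw [map_mul, constantCoeff_X, mul_zero, map_zero, sub_zero]
    exact Ideal.mul_mem_left _ _ hXi

theorem ker_cc (K : Type*) [CommRing K] :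
    RingHom.ker (constantCoeff : MvPolynomial (Fin 2) K →+* K)
      = Ideal.span ({X 0, X 1} : Set (MvPolynomial (Fin 2) K)) := by
  apply le_antisymm
  · intro p hp
    have h := claimcc K p
    have h0 : constantCoeff p = 0 := RingHom.mem_ker.mp hp
    rwa [h0, map_zero, sub_zero] at h
  · rw [Ideal.span_le]
    rintro g hg
    rcases hg with rfl | hg
    · simp [RingHom.mem_ker]
    · rw [Set.mem_singleton_iff] at hg
      subst hg
      simp [RingHom.mem_ker]

end AuxiliaryLemmas

set_option maxHeartbeats 2000000

/-- Let `F` be the fraction field of `K[x,y]` and `ψ : K[x₁,x₂,x₃,x₄] → F` the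
`K`-algebra homomorphism with `x₁ ↦ x`, `x₂ ↦ y`, `x₃ ↦ (1 + y^a)/x`, `x₄ ↦ (1 + x^b)/y`.
Then `ker ψ = (x₁x₃ − 1 − x₂^a, x₂x₄ − 1 − x₁^b)`. -/
theorem stmt5 (K : Type*) [Field K] [IsAlgClosed K] [CharZero K]
    (a b : ℕ) (ha : 0 < a) (hb : 0 < b)
    (F : Type*) [Field F] [Algebra (MvPolynomial (Fin 2) K) F]
    [IsFractionRing (MvPolynomial (Fin 2) K) F]
    [Algebra K F] [IsScalarTower K (MvPolynomial (Fin 2) K) F]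
    (x y : F)
    (hx : x = algebraMap (MvPolynomial (Fin 2) K) F (X 0))
    (hy : y = algebraMap (MvPolynomial (Fin 2) K) F (X 1))
    (ψ : MvPolynomial (Fin 4) K →ₐ[K] F)
    (hψ : ψ = aeval ![x, y, (1 + y ^ a) / x, (1 + x ^ b) / y]) :
    RingHom.ker (ψ : MvPolynomial (Fin 4) K →+* F) =
      Ideal.span ({X 0 * X 2 - 1 - X 1 ^ a, X 1 * X 3 - 1 - X 0 ^ b} :
        Set (MvPolynomial (Fin 4) K)) := by
  classical
  have injF : Function.Injective (algebraMap (MvPolynomial (Fin 2) K) F) :=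
    IsFractionRing.injective _ _
  have hx0 : x ≠ 0 := by
    rw [hx]
    intro hcon
    exact X_ne_zero _ (injF (by rwa [map_zero]))
  have hy0 : y ≠ 0 := by
    rw [hy]
    intro hcon
    exact X_ne_zero _ (injF (by rwa [map_zero]))
  -- the two generators at the Polynomial-tower level
  set g : Polynomial (MvPolynomial (Fin 2) K) :=
    Polynomial.C (X 0) * Polynomial.X - Polynomial.C (1 + X 1 ^ a) with hg
  set h : Polynomial (Polynomial (MvPolynomial (Fin 2) K)) :=
    Polynomial.C (Polynomial.C (X 1)) * Polynomial.X
      - Polynomial.C (Polynomial.C (1 + X 0 ^ b)) with hhdef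
  -- auxiliary nonzero Laurent facts
  have hXa : (1 : Polynomial K) + Polynomial.X ^ a ≠ 0 := by
    intro hcon
    have := congrArg (Polynomial.eval 0) hcon
    simp [zero_pow ha.ne'] at this
  have hXb : (1 : Polynomial K) + Polynomial.X ^ b ≠ 0 := by
    intro hcon
    have := congrArg (Polynomial.eval 0) hcon
    simp [zero_pow hb.ne'] at this
  -- ========== app #1 : kernel of Φ₃ ==========
  set φ₂ : MvPolynomial (Fin 2) K →+* F := algebraMap (MvPolynomial (Fin 2) K) F with hφ₂
  have hker2 : RingHom.ker φ₂ = ⊥ := (RingHom.injective_iff_ker_eq_bot φ₂).mp injF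
  have hker3 : RingHom.ker (Polynomial.eval₂RingHom φ₂ ((1 + y ^ a) / x)) = Ideal.span {g} := by
    have h1 := main_ker φ₂ ⊥ (X 0) (1 + X 1 ^ a) ((1 + y ^ a) / x)
      (by rw [← hx, map_add, map_one, map_pow, ← hy]
          exact div_mul_cancel₀ _ hx0)
      hker2
      (by rw [bot_sup_eq, ← ker_ev0 K]; exact RingHom.ker_isPrime _)
      (by rw [bot_sup_eq, ← ker_ev0 K, RingHom.mem_ker]
          simp only [AlgHom.toRingHom_eq_coe, RingHom.coe_coe, map_add, map_one, map_pow]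
          rw [show (ev0 K) (X 1) = Polynomial.X by simp [ev0]]
          exact hXa)
    rwa [Ideal.map_bot, bot_sup_eq, ← hg] at h1
  -- ========== app #0 : primality over the auxiliary field ==========
  set F' := FractionRing (Polynomial K) with hF'
  set φ'' : MvPolynomial (Fin 2) K →+* F' :=
    (algebraMap (Polynomial K) F').comp (ev1 K).toRingHom with hφ''
  have injF' : Function.Injective (algebraMap (Polynomial K) F') :=
    IsFractionRing.injective _ _
  have hkerφ'' : RingHom.ker φ'' = Ideal.span ({X 1} : Set (MvPolynomial (Fin 2) K)) := by
    rw [← ker_ev1 K]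
    ext p
    simp only [RingHom.mem_ker, hφ'', RingHom.coe_comp, Function.comp_apply,
      AlgHom.toRingHom_eq_coe, RingHom.coe_coe]
    constructor
    · intro hcon
      have : ev1 K p = 0 := by
        apply injF'
        rwa [map_zero]
      exact this
    · intro hcon; rw [hcon, map_zero]
  have hφ''X0 : φ'' (X 0) = algebraMap (Polynomial K) F' Polynomial.X := by
    simp [hφ'', ev1]
  have halgX : algebraMap (Polynomial K) F' Polynomial.X ≠ 0 := by
    intro hcon
    exact Polynomial.X_ne_zero (injF' (by rwa [map_zero]))
  have hkerΦ' : RingHom.ker (Polynomial.eval₂RingHom φ''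
        ((algebraMap (Polynomial K) F' Polynomial.X)⁻¹))
      = Ideal.span {Polynomial.C (X 1)} ⊔ Ideal.span {g} := by
    have h1 := main_ker φ'' (Ideal.span ({X 1} : Set (MvPolynomial (Fin 2) K)))
      (X 0) (1 + X 1 ^ a) ((algebraMap (Polynomial K) F' Polynomial.X)⁻¹)
      (by rw [hφ''X0, inv_mul_cancel₀ halgX]
          have : φ'' (1 + X 1 ^ a) = 1 := by
            simp [hφ'', ev1, zero_pow ha.ne']
          rw [this])
      hkerφ''
      (by have hsup : Ideal.span ({X 1} : Set (MvPolynomial (Fin 2) K)) ⊔ Ideal.span {X 0}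
              = Ideal.span ({X 0, X 1} : Set (MvPolynomial (Fin 2) K)) := by
            rw [← Ideal.span_union, Set.union_comm]
            rfl
          rw [hsup, ← ker_cc K]
          exact RingHom.ker_isPrime _)
      (by have hsup : Ideal.span ({X 1} : Set (MvPolynomial (Fin 2) K)) ⊔ Ideal.span {X 0}
              = Ideal.span ({X 0, X 1} : Set (MvPolynomial (Fin 2) K)) := by
            rw [← Ideal.span_union, Set.union_comm]
            rfl
          rw [hsup, ← ker_cc K, RingHom.mem_ker]
          simp [zero_pow ha.ne'])
    rw [Ideal.map_span, Set.image_singleton, ← hg] at h1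
    exact h1
  have hP : (Ideal.span {g} ⊔ Ideal.span {Polynomial.C (X 1)}).IsPrime := by
    rw [sup_comm, ← hkerΦ']
    exact RingHom.ker_isPrime _
  have hfP : Polynomial.C (1 + X 0 ^ b) ∉ Ideal.span {g} ⊔ Ideal.span {Polynomial.C (X 1)} := by
    rw [sup_comm, ← hkerΦ', RingHom.mem_ker, Polynomial.coe_eval₂RingHom, Polynomial.eval₂_C]
    have : φ'' (1 + X 0 ^ b) = algebraMap (Polynomial K) F' (1 + Polynomial.X ^ b) := by
      simp [hφ'', ev1]
    rw [this]
    intro hcon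
    exact hXb (injF' (by rwa [map_zero]))
  -- ========== app #2 : kernel of Φ₄ ==========
  set Φ₃ : Polynomial (MvPolynomial (Fin 2) K) →+* F :=
    Polynomial.eval₂RingHom φ₂ ((1 + y ^ a) / x) with hΦ₃
  set Φ₄ : Polynomial (Polynomial (MvPolynomial (Fin 2) K)) →+* F :=
    Polynomial.eval₂RingHom Φ₃ ((1 + x ^ b) / y) with hΦ₄
  have hker4 : RingHom.ker Φ₄ = Ideal.span {Polynomial.C g} ⊔ Ideal.span {h} := by
    have h1 := main_ker Φ₃ (Ideal.span {g}) (Polynomial.C (X 1))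
      (Polynomial.C (1 + X 0 ^ b)) ((1 + x ^ b) / y)
      (by rw [hΦ₃]
          simp only [Polynomial.coe_eval₂RingHom, Polynomial.eval₂_C]
          rw [show φ₂ (X 1) = y from hy.symm,
            show φ₂ (1 + X 0 ^ b) = 1 + x ^ b by rw [map_add, map_one, map_pow, ← hx]]
          exact div_mul_cancel₀ _ hy0)
      hker3 hP hfP
    rw [Ideal.map_span, Set.image_singleton, ← hhdef] at h1
    exact h1
  -- ========== transport to MvPolynomial (Fin 4) ==========
  set E : MvPolynomial (Fin 4) K →ₐ[K] Polynomial (Polynomial (MvPolynomial (Fin 2) K)) :=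
    aeval ![Polynomial.C (Polynomial.C (X 0)), Polynomial.C (Polynomial.C (X 1)),
      Polynomial.C Polynomial.X, Polynomial.X] with hE
  set ρ : MvPolynomial (Fin 2) K →ₐ[K] MvPolynomial (Fin 4) K :=
    aeval ![X 0, X 1] with hρ
  set E' : Polynomial (Polynomial (MvPolynomial (Fin 2) K)) →ₐ[K] MvPolynomial (Fin 4) K :=
    Polynomial.aevalTower (Polynomial.aevalTower ρ (X 2)) (X 3) with hE'
  have hcomp : ∀ p : MvPolynomial (Fin 4) K, ψ p = Φ₄ (E p) := by
    have hhom : (ψ : MvPolynomial (Fin 4) K →+* F)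
        = Φ₄.comp (E : MvPolynomial (Fin 4) K →+* Polynomial (Polynomial (MvPolynomial (Fin 2) K))) := by
      apply MvPolynomial.ringHom_ext
      · intro r
        simp only [RingHom.coe_comp, Function.comp_apply, RingHom.coe_coe, hE, aeval_C]
        rw [show (algebraMap K (Polynomial (Polynomial (MvPolynomial (Fin 2) K))) r)
            = Polynomial.C (Polynomial.C (MvPolynomial.C r)) by
          rw [Polynomial.algebraMap_apply, Polynomial.algebraMap_apply, MvPolynomial.algebraMap_eq]]
        rw [hΦ₄]
        simp only [Polynomial.coe_eval₂RingHom, Polynomial.eval₂_C]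
        rw [hΦ₃]
        simp only [Polynomial.coe_eval₂RingHom, Polynomial.eval₂_C]
        rw [hψ, aeval_C, hφ₂, ← MvPolynomial.algebraMap_eq,
          ← IsScalarTower.algebraMap_apply K (MvPolynomial (Fin 2) K) F]
      · intro i
        fin_cases i
        · show ψ (X 0) = Φ₄ (E (X 0))
          rw [hψ, hE, aeval_X, aeval_X]
          simp only [Matrix.cons_val_zero]
          rw [hΦ₄]
          simp only [Polynomial.coe_eval₂RingHom, Polynomial.eval₂_C]
          rw [hΦ₃]
          simp only [Polynomial.coe_eval₂RingHom, Polynomial.eval₂_C]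
          exact hx
        · show ψ (X 1) = Φ₄ (E (X 1))
          rw [hψ, hE, aeval_X, aeval_X]
          simp only [Matrix.cons_val_one, Matrix.head_cons, Matrix.cons_val_zero]
          rw [hΦ₄]
          simp only [Polynomial.coe_eval₂RingHom, Polynomial.eval₂_C]
          rw [hΦ₃]
          simp only [Polynomial.coe_eval₂RingHom, Polynomial.eval₂_C]
          exact hy
        · show ψ (X 2) = Φ₄ (E (X 2))
          rw [hψ, hE, aeval_X, aeval_X]
          show (1 + y ^ a) / x = Φ₄ (Polynomial.C Polynomial.X)
          rw [hΦ₄]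
          simp only [Polynomial.coe_eval₂RingHom, Polynomial.eval₂_C]
          rw [hΦ₃]
          simp only [Polynomial.coe_eval₂RingHom, Polynomial.eval₂_X]
        · show ψ (X 3) = Φ₄ (E (X 3))
          rw [hψ, hE, aeval_X, aeval_X]
          show (1 + x ^ b) / y = Φ₄ Polynomial.X
          rw [hΦ₄]
          simp only [Polynomial.coe_eval₂RingHom, Polynomial.eval₂_X]
    intro p
    exact congrArg (fun f => f p) (congrArg DFunLike.coe hhom)
  have hE'E : ∀ p : MvPolynomial (Fin 4) K, E' (E p) = p := by
    have hhom : E'.comp E = AlgHom.id K (MvPolynomial (Fin 4) K) := by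
      apply MvPolynomial.algHom_ext
      intro i
      fin_cases i <;>
        simp [hE, hE', hρ, Polynomial.aevalTower_C, Polynomial.aevalTower_X]
    intro p
    exact congrArg (fun f => f p) (congrArg DFunLike.coe hhom)
  have hE'Cg : E' (Polynomial.C g) = X 0 * X 2 - 1 - X 1 ^ a := by
    rw [hg]
    simp only [hE', Polynomial.aevalTower_C, map_sub, map_mul, map_add, map_one, map_pow,
      Polynomial.aevalTower_X, hρ, aeval_X, Matrix.cons_val_zero, Matrix.cons_val_one,
      Matrix.head_cons]
    ring
  have hE'h : E' h = X 1 * X 3 - 1 - X 0 ^ b := by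
    rw [hhdef, map_sub E' _ _, map_mul E' _ _, hE']
    rw [Polynomial.aevalTower_X, Polynomial.aevalTower_C, Polynomial.aevalTower_C,
      Polynomial.aevalTower_C, Polynomial.aevalTower_C, hρ]
    rw [show (aeval ![X 0, X 1] : MvPolynomial (Fin 2) K →ₐ[K] MvPolynomial (Fin 4) K) (X 1)
        = (X 1 : MvPolynomial (Fin 4) K) by rw [aeval_X]; rfl]
    rw [map_add, map_one, map_pow]
    rw [show (aeval ![X 0, X 1] : MvPolynomial (Fin 2) K →ₐ[K] MvPolynomial (Fin 4) K) (X 0)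
        = (X 0 : MvPolynomial (Fin 4) K) by rw [aeval_X]; rfl]
    ring
  apply le_antisymm
  · intro p hp
    have hp0 : Φ₄ (E p) = 0 := by
      rw [← hcomp p]
      exact RingHom.mem_ker.mp hp
    have hmem : E p ∈ Ideal.span {Polynomial.C g} ⊔ Ideal.span {h} := by
      rw [← hker4]
      exact RingHom.mem_ker.mpr hp0
    have hmem2 : E p ∈ Ideal.span ({Polynomial.C g, h} :
        Set (Polynomial (Polynomial (MvPolynomial (Fin 2) K)))) := by
      rwa [show ({Polynomial.C g, h} : Set (Polynomial (Polynomial (MvPolynomial (Fin 2) K))))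
          = {Polynomial.C g} ∪ {h} from rfl, Ideal.span_union]
    have hmap := Ideal.mem_map_of_mem (E' : Polynomial (Polynomial (MvPolynomial (Fin 2) K)) →+* MvPolynomial (Fin 4) K) hmem2
    rw [Ideal.map_span, Set.image_insert_eq, Set.image_singleton] at hmap
    simp only [RingHom.coe_coe] at hmap
    rw [hE'Cg, hE'h] at hmap
    rwa [hE'E p] at hmap
  · rw [Ideal.span_le]
    rintro q hq
    rcases hq with rfl | hq
    · rw [SetLike.mem_coe, RingHom.mem_ker, RingHom.coe_coe, map_sub, map_sub, map_mul,
        map_pow, map_one]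
      rw [show ψ (X 0) = x by rw [hψ, aeval_X]; rfl,
        show ψ (X 1) = y by rw [hψ, aeval_X]; rfl,
        show ψ (X 2) = (1 + y ^ a) / x by rw [hψ, aeval_X]; rfl]
      rw [mul_comm x ((1 + y ^ a) / x), div_mul_cancel₀ _ hx0]
      ring
    · rw [Set.mem_singleton_iff] at hq
      subst hq
      rw [SetLike.mem_coe, RingHom.mem_ker, RingHom.coe_coe, map_sub, map_sub, map_mul,
        map_pow, map_one]
      rw [show ψ (X 1) = y by rw [hψ, aeval_X]; rfl,
        show ψ (X 3) = (1 + x ^ b) / y by rw [hψ, aeval_X]; rfl,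
        show ψ (X 0) = x by rw [hψ, aeval_X]; rfl]
      rw [mul_comm y ((1 + x ^ b) / y), div_mul_cancel₀ _ hy0]
      ring
end

section
/- For all positive integers a and b, the ring R(a,b) = K[x₁,x₂,x₃,x₄]/(x₁x₃ − 1 − x₂^a, x₂x₄ − 1 − x₁^b) is an integral domain; equivalently, the ideal of K[x₁,x₂,x₃,x₄] generated by x₁x₃ − 1 − x₂^a and x₂x₄ − 1 − x₁^b is prime. -/
open MvPolynomial

section Aux

private lemma primeCXsub1 {R : Type*} [CommRing R] [IsDomain R] (r : R) (hr : r ≠ 0) :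
    Prime (Polynomial.C r * Polynomial.X - 1 : Polynomial R) := by
  have hne : (Polynomial.C r * Polynomial.X - 1 : Polynomial R) ≠ 0 := by
    intro h
    have := congrArg (fun p => Polynomial.eval 0 p) h
    simp at this
  rw [← Ideal.span_singleton_prime hne]
  have hdom : IsDomain (Localization.Away r) := by
    refine IsLocalization.isDomain_localization
      (le_nonZeroDivisors_of_noZeroDivisors ?_)
    rintro ⟨n, hn⟩
    exact hr (pow_eq_zero_iff' .. |>.mp hn |>.1)
  have : IsDomain (AdjoinRoot (Polynomial.C r * Polynomial.X - 1)) :=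
    MulEquiv.isDomain (Localization.Away r)
      (Localization.awayEquivAdjoin r).symm.toRingEquiv.toMulEquiv
  exact (Ideal.Quotient.isDomain_iff_prime _).mp this

private lemma prime_aux {R : Type*} [CommRing R] [IsDomain R] {n : ℕ} (i : Fin n) :
    Prime (X 0 * X i.succ - 1 : MvPolynomial (Fin (n+1)) R) := by
  rw [← MulEquiv.prime_iff (finSuccEquiv R n).toMulEquiv]
  have hc : ∀ p : MvPolynomial (Fin (n+1)) R,
      (finSuccEquiv R n).toMulEquiv p = finSuccEquiv R n p := fun _ => rfl
  rw [hc]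
  have himg : finSuccEquiv R n (X 0 * X i.succ - 1) =
      Polynomial.C (X i) * Polynomial.X - 1 := by
    rw [map_sub, map_mul, map_one, finSuccEquiv_X_zero, finSuccEquiv_X_succ, mul_comm]
  rw [himg]
  exact primeCXsub1 _ (X_ne_zero i)

private lemma prime_aux2 {R : Type*} [CommRing R] [IsDomain R] {n : ℕ} {i j : Fin n}
    (h : Prime (X i * X j - 1 : MvPolynomial (Fin n) R)) :
    Prime (X i.succ * X j.succ - 1 : MvPolynomial (Fin (n+1)) R) := by
  rw [← MulEquiv.prime_iff (finSuccEquiv R n).toMulEquiv]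
  have hc : ∀ p : MvPolynomial (Fin (n+1)) R,
      (finSuccEquiv R n).toMulEquiv p = finSuccEquiv R n p := fun _ => rfl
  rw [hc]
  have himg : finSuccEquiv R n (X i.succ * X j.succ - 1) =
      Polynomial.C (X i * X j - 1) := by
    rw [map_sub, map_mul, map_one, finSuccEquiv_X_succ, finSuccEquiv_X_succ,
      ← map_mul, ← map_one (Polynomial.C (R := MvPolynomial (Fin n) R)), ← map_sub]
  rw [himg, Polynomial.prime_C_iff]
  exact h

private lemma prime02 {R : Type*} [CommRing R] [IsDomain R] :
    Prime (X 0 * X 2 - 1 : MvPolynomial (Fin 4) R) := by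
  have : (2 : Fin 4) = Fin.succ 1 := by decide
  rw [this]; exact prime_aux 1

private lemma prime13 {R : Type*} [CommRing R] [IsDomain R] :
    Prime (X 1 * X 3 - 1 : MvPolynomial (Fin 4) R) := by
  have h1 : (1 : Fin 4) = Fin.succ 0 := by decide
  have h3 : (3 : Fin 4) = Fin.succ 2 := by decide
  rw [h1, h3]
  refine prime_aux2 ?_
  have : (2 : Fin 3) = Fin.succ 1 := by decide
  rw [this]; exact prime_aux 1

/-- Substitution setting the `i`-th variable to `0`. -/
noncomputable def sub0 {R : Type*} [CommRing R] (i : Fin 4) :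
    MvPolynomial (Fin 4) R →ₐ[R] MvPolynomial (Fin 4) R :=
  aeval (Function.update X i 0)

private lemma sub0_X_same {R : Type*} [CommRing R] (i : Fin 4) :
    sub0 (R := R) i (X i) = 0 := by simp [sub0]

private lemma sub0_X_ne {R : Type*} [CommRing R] {i j : Fin 4} (h : j ≠ i) :
    sub0 (R := R) i (X j) = X j := by
  simp [sub0, Function.update_of_ne h]

private lemma X_dvd_sub_sub0 {R : Type*} [CommRing R] (i : Fin 4)
    (f : MvPolynomial (Fin 4) R) : X i ∣ f - sub0 i f := by
  induction f using MvPolynomial.induction_on with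
  | C c => simp [sub0]
  | add p q hp hq =>
      have : p + q - sub0 i (p + q) = (p - sub0 i p) + (q - sub0 i q) := by
        rw [map_add]; ring
      rw [this]; exact dvd_add hp hq
  | mul_X p j hp =>
      rw [map_mul]
      by_cases hj : j = i
      · subst hj
        have : p * X j - sub0 j p * sub0 j (X j) = p * X j := by
          rw [sub0_X_same]; ring
        rw [this]; exact Dvd.intro_left p rfl
      · have : p * X j - sub0 i p * sub0 i (X j) = (p - sub0 i p) * X j := by
          rw [sub0_X_ne hj]; ring
        rw [this]; exact hp.mul_right _

variable {K : Type*} [Field K] [CharZero K]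

private lemma nzd0 (a b : ℕ) (ha : 0 < a) (hb : 0 < b) (f : MvPolynomial (Fin 4) K)
    (hf : X 0 * f ∈ Ideal.span ({X 0 * X 2 - 1 - X 1 ^ a, X 1 * X 3 - 1 - X 0 ^ b} :
      Set (MvPolynomial (Fin 4) K))) :
    f ∈ Ideal.span ({X 0 * X 2 - 1 - X 1 ^ a, X 1 * X 3 - 1 - X 0 ^ b} :
      Set (MvPolynomial (Fin 4) K)) := by
  obtain ⟨b, rfl⟩ : ∃ b', b = b' + 1 := ⟨b - 1, (Nat.succ_pred_eq_of_pos hb).symm⟩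
  obtain ⟨g, h, e⟩ := Ideal.mem_span_pair.mp hf
  set f₁ : MvPolynomial (Fin 4) K := X 0 * X 2 - 1 - X 1 ^ a with hf₁
  set f₂ : MvPolynomial (Fin 4) K := X 1 * X 3 - 1 - X 0 ^ (b+1) with hf₂
  have hσ1 : sub0 0 f₁ = - 1 - X 1 ^ a := by
    rw [hf₁]
    rw [map_sub, map_sub, map_mul, map_pow, map_one, sub0_X_same,
      sub0_X_ne (by decide : (1:Fin 4) ≠ 0), zero_mul, zero_sub]
  have hσ2 : sub0 0 f₂ = X 1 * X 3 - 1 := by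
    rw [hf₂]
    rw [map_sub, map_sub, map_mul, map_pow, map_one, sub0_X_same,
      sub0_X_ne (by decide : (1:Fin 4) ≠ 0), sub0_X_ne (by decide : (3:Fin 4) ≠ 0),
      zero_pow (Nat.succ_ne_zero b), sub_zero]
  have eσ : sub0 0 g * (-1 - X 1 ^ a) + sub0 0 h * (X 1 * X 3 - 1) = 0 := by
    have := congrArg (sub0 0) e
    rw [map_add, map_mul, map_mul, map_mul, hσ1, hσ2, sub0_X_same, zero_mul] at this
    exact this
  set p : MvPolynomial (Fin 4) K := X 1 * X 3 - 1 with hp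
  have hpprime : Prime p := prime13
  have hkey : p * sub0 0 h = (1 + X 1 ^ a) * sub0 0 g := by linear_combination eσ
  have hpdvd : p ∣ sub0 0 g := by
    refine hpprime.2.2 _ _ ⟨sub0 0 h, hkey.symm⟩ |>.resolve_left ?_
    rintro ⟨c, hc⟩
    rw [hp] at hc
    have := congrArg (eval (fun _ => (1:K))) hc
    simp at this
  obtain ⟨q, hq⟩ := hpdvd
  have hσh : sub0 0 h = (1 + X 1 ^ a) * q := by
    have h2 : p * sub0 0 h = p * ((1 + X 1 ^ a) * q) := by
      rw [hkey, hq]; ring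
    exact mul_left_cancel₀ hpprime.ne_zero h2
  obtain ⟨g₂, hg₂⟩ := X_dvd_sub_sub0 0 g
  obtain ⟨h₂, hh₂⟩ := X_dvd_sub_sub0 0 h
  have hgg : g = p * q + X 0 * g₂ := by linear_combination hg₂ + hq
  have hhh : h = (1 + X 1 ^ a) * q + X 0 * h₂ := by linear_combination hh₂ + hσh
  have key : X 0 * f =
      X 0 * ((q * X 0 ^ b + g₂) * f₁ + (q * X 2 + h₂) * f₂) := by
    rw [hf₁, hf₂] at *
    linear_combination (-1 : MvPolynomial (Fin 4) K) * e + (X 0 * X 2 - 1 - X 1 ^ a) * hgg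
      + (X 1 * X 3 - 1 - X 0 ^ (b+1)) * hhh
  have := mul_left_cancel₀ (X_ne_zero (0 : Fin 4)) key
  exact Ideal.mem_span_pair.mpr ⟨q * X 0 ^ b + g₂, q * X 2 + h₂, this.symm⟩

private lemma nzd1 (a b : ℕ) (ha : 0 < a) (hb : 0 < b) (f : MvPolynomial (Fin 4) K)
    (hf : X 1 * f ∈ Ideal.span ({X 0 * X 2 - 1 - X 1 ^ a, X 1 * X 3 - 1 - X 0 ^ b} :
      Set (MvPolynomial (Fin 4) K))) :
    f ∈ Ideal.span ({X 0 * X 2 - 1 - X 1 ^ a, X 1 * X 3 - 1 - X 0 ^ b} :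
      Set (MvPolynomial (Fin 4) K)) := by
  obtain ⟨a, rfl⟩ : ∃ a', a = a' + 1 := ⟨a - 1, (Nat.succ_pred_eq_of_pos ha).symm⟩
  obtain ⟨g, h, e⟩ := Ideal.mem_span_pair.mp hf
  set f₁ : MvPolynomial (Fin 4) K := X 0 * X 2 - 1 - X 1 ^ (a+1) with hf₁
  set f₂ : MvPolynomial (Fin 4) K := X 1 * X 3 - 1 - X 0 ^ b with hf₂
  have hσ1 : sub0 1 f₁ = X 0 * X 2 - 1 := by
    rw [hf₁]
    rw [map_sub, map_sub, map_mul, map_pow, map_one, sub0_X_same,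
      sub0_X_ne (by decide : (0:Fin 4) ≠ 1), sub0_X_ne (by decide : (2:Fin 4) ≠ 1),
      zero_pow (Nat.succ_ne_zero a), sub_zero]
  have hσ2 : sub0 1 f₂ = - 1 - X 0 ^ b := by
    rw [hf₂]
    rw [map_sub, map_sub, map_mul, map_pow, map_one, sub0_X_same,
      sub0_X_ne (by decide : (0:Fin 4) ≠ 1), zero_mul, zero_sub]
  have eσ : sub0 1 g * (X 0 * X 2 - 1) + sub0 1 h * (-1 - X 0 ^ b) = 0 := by
    have := congrArg (sub0 1) e
    rw [map_add, map_mul, map_mul, map_mul, hσ1, hσ2, sub0_X_same, zero_mul] at this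
    exact this
  set p : MvPolynomial (Fin 4) K := X 0 * X 2 - 1 with hp
  have hpprime : Prime p := prime02
  have hkey : p * sub0 1 g = (1 + X 0 ^ b) * sub0 1 h := by linear_combination eσ
  have hpdvd : p ∣ sub0 1 h := by
    refine hpprime.2.2 _ _ ⟨sub0 1 g, hkey.symm⟩ |>.resolve_left ?_
    rintro ⟨c, hc⟩
    rw [hp] at hc
    have := congrArg (eval (fun _ => (1:K))) hc
    simp at this
  obtain ⟨q, hq⟩ := hpdvd
  have hσg : sub0 1 g = (1 + X 0 ^ b) * q := by
    have h2 : p * sub0 1 g = p * ((1 + X 0 ^ b) * q) := by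
      rw [hkey, hq]; ring
    exact mul_left_cancel₀ hpprime.ne_zero h2
  obtain ⟨g₂, hg₂⟩ := X_dvd_sub_sub0 1 g
  obtain ⟨h₂, hh₂⟩ := X_dvd_sub_sub0 1 h
  have hgg : g = (1 + X 0 ^ b) * q + X 1 * g₂ := by linear_combination hg₂ + hσg
  have hhh : h = p * q + X 1 * h₂ := by linear_combination hh₂ + hq
  have key : X 1 * f =
      X 1 * ((q * X 3 + g₂) * f₁ + (q * X 1 ^ a + h₂) * f₂) := by
    rw [hf₁, hf₂] at *
    linear_combination (-1 : MvPolynomial (Fin 4) K) * e + (X 0 * X 2 - 1 - X 1 ^ (a+1)) * hgg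
      + (X 1 * X 3 - 1 - X 0 ^ b) * hhh
  have := mul_left_cancel₀ (X_ne_zero (1 : Fin 4)) key
  exact Ideal.mem_span_pair.mpr ⟨q * X 3 + g₂, q * X 1 ^ a + h₂, this.symm⟩


variable {K : Type*} [Field K] [CharZero K]

noncomputable def emb2 (K : Type*) [CommSemiring K] :
    MvPolynomial (Fin 2) K →ₐ[K] MvPolynomial (Fin 4) K :=
  rename (Fin.castLE (by norm_num))

lemma emb2_X0 : emb2 K (X 0) = X 0 := by
  rw [emb2, rename_X]; rfl

lemma emb2_X1 : emb2 K (X 1) = X 1 := by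
  rw [emb2, rename_X]; rfl

lemma reduce (a b : ℕ) (f : MvPolynomial (Fin 4) K) :
    ∃ (N : ℕ) (g : MvPolynomial (Fin 2) K) (h : MvPolynomial (Fin 4) K),
      h ∈ Ideal.span ({X 0 * X 2 - 1 - X 1 ^ a, X 1 * X 3 - 1 - X 0 ^ b} :
        Set (MvPolynomial (Fin 4) K)) ∧
      (X 0 * X 1) ^ N * f = emb2 K g + h := by
  set f₁ : MvPolynomial (Fin 4) K := X 0 * X 2 - 1 - X 1 ^ a with hf₁
  set f₂ : MvPolynomial (Fin 4) K := X 1 * X 3 - 1 - X 0 ^ b with hf₂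
  set I : Ideal (MvPolynomial (Fin 4) K) := Ideal.span {f₁, f₂} with hI
  have hf₁I : f₁ ∈ I := Ideal.subset_span (by simp)
  have hf₂I : f₂ ∈ I := Ideal.subset_span (by simp)
  have hembpow : ∀ k : ℕ, emb2 K ((X 0 * X 1) ^ k) =
      (X 0 * X 1 : MvPolynomial (Fin 4) K) ^ k := by
    intro k; rw [map_pow, map_mul, emb2_X0, emb2_X1]
  induction f using MvPolynomial.induction_on with
  | C c =>
      exact ⟨0, C c, 0, I.zero_mem, by rw [pow_zero, one_mul, add_zero, emb2, rename_C]⟩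
  | add p q hp hq =>
      obtain ⟨Np, gp, hp', hIp, ep⟩ := hp
      obtain ⟨Nq, gq, hq', hIq, eq'⟩ := hq
      refine ⟨Np + Nq, (X 0 * X 1) ^ Nq * gp + (X 0 * X 1) ^ Np * gq,
        (X 0 * X 1) ^ Nq * hp' + (X 0 * X 1) ^ Np * hq',
        I.add_mem (I.mul_mem_left _ hIp) (I.mul_mem_left _ hIq), ?_⟩
      have e1 : emb2 K ((X 0 * X 1) ^ Nq * gp + (X 0 * X 1) ^ Np * gq) =
          (X 0 * X 1) ^ Nq * emb2 K gp + (X 0 * X 1) ^ Np * emb2 K gq := by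
        rw [map_add, map_mul, map_mul, hembpow, hembpow]
      rw [e1]
      linear_combination (X 0 * X 1 : MvPolynomial (Fin 4) K) ^ Nq * ep +
        (X 0 * X 1 : MvPolynomial (Fin 4) K) ^ Np * eq'
  | mul_X p j hp =>
      obtain ⟨N, g, h, hIh, e⟩ := hp
      fin_cases j <;>
        simp only [show (⟨0, by norm_num⟩ : Fin 4) = 0 from rfl,
          show (⟨1, by norm_num⟩ : Fin 4) = 1 from rfl,
          show (⟨2, by norm_num⟩ : Fin 4) = 2 from rfl,
          show (⟨3, by norm_num⟩ : Fin 4) = 3 from rfl]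
      · refine ⟨N, g * X 0, h * X 0, I.mul_mem_right _ hIh, ?_⟩
        rw [map_mul, emb2_X0]
        linear_combination (X 0 : MvPolynomial (Fin 4) K) * e
      · refine ⟨N, g * X 1, h * X 1, I.mul_mem_right _ hIh, ?_⟩
        rw [map_mul, emb2_X1]
        linear_combination (X 1 : MvPolynomial (Fin 4) K) * e
      · refine ⟨N + 1, g * (X 1 * (1 + X 1 ^ a)),
          h * (X 0 * X 1 * X 2) + emb2 K g * X 1 * f₁,
          I.add_mem (I.mul_mem_right _ hIh) (I.mul_mem_left _ hf₁I), ?_⟩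
        have e1 : emb2 K (g * (X 1 * (1 + X 1 ^ a))) =
            emb2 K g * (X 1 * (1 + X 1 ^ a)) := by
          rw [map_mul, map_mul, map_add, map_one, map_pow, emb2_X1]
        rw [e1, hf₁]
        linear_combination (X 0 * X 1 * X 2 : MvPolynomial (Fin 4) K) * e
      · refine ⟨N + 1, g * (X 0 * (1 + X 0 ^ b)),
          h * (X 0 * X 1 * X 3) + emb2 K g * X 0 * f₂,
          I.add_mem (I.mul_mem_right _ hIh) (I.mul_mem_left _ hf₂I), ?_⟩
        have e1 : emb2 K (g * (X 0 * (1 + X 0 ^ b))) =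
            emb2 K g * (X 0 * (1 + X 0 ^ b)) := by
          rw [map_mul, map_mul, map_add, map_one, map_pow, emb2_X0]
        rw [e1, hf₂]
        linear_combination (X 0 * X 1 * X 3 : MvPolynomial (Fin 4) K) * e

end Aux

/-- For all positive integers `a` and `b`, the ideal of `K[x₁,x₂,x₃,x₄]` generated by
`x₁x₃ − 1 − x₂^a` and `x₂x₄ − 1 − x₁^b` is prime; equivalently the quotient ring
`R(a,b)` is an integral domain. -/
theorem stmt6 (K : Type*) [Field K] [IsAlgClosed K] [CharZero K]
    (a b : ℕ) (ha : 0 < a) (hb : 0 < b) :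
    (Ideal.span ({X 0 * X 2 - 1 - X 1 ^ a, X 1 * X 3 - 1 - X 0 ^ b} :
      Set (MvPolynomial (Fin 4) K))).IsPrime := by
  classical
  set F := FractionRing (MvPolynomial (Fin 2) K)
  set u : F := algebraMap (MvPolynomial (Fin 2) K) F (X 0) with hu
  set w : F := algebraMap (MvPolynomial (Fin 2) K) F (X 1) with hw
  have hinj : Function.Injective (algebraMap (MvPolynomial (Fin 2) K) F) :=
    IsFractionRing.injective _ _
  have hu0 : u ≠ 0 := by
    rw [hu, ← map_zero (algebraMap (MvPolynomial (Fin 2) K) F)]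
    exact fun hh => X_ne_zero 0 (hinj hh)
  have hw0 : w ≠ 0 := by
    rw [hw, ← map_zero (algebraMap (MvPolynomial (Fin 2) K) F)]
    exact fun hh => X_ne_zero 1 (hinj hh)
  set v : Fin 4 → F := ![u, w, (1 + w ^ a) * u⁻¹, (1 + u ^ b) * w⁻¹] with hv
  set φ : MvPolynomial (Fin 4) K →+* F :=
    eval₂Hom ((algebraMap (MvPolynomial (Fin 2) K) F).comp C) v with hφ
  have hφX : ∀ j, φ (X j) = v j := fun j => eval₂Hom_X' _ _ _
  have hv0 : v 0 = u := rfl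
  have hv1 : v 1 = w := rfl
  have hv2 : v 2 = (1 + w ^ a) * u⁻¹ := rfl
  have hv3 : v 3 = (1 + u ^ b) * w⁻¹ := rfl
  have hφ1 : φ (X 0 * X 2 - 1 - X 1 ^ a) = 0 := by
    rw [map_sub, map_sub, map_mul, map_pow, map_one, hφX, hφX, hφX, hv0, hv1, hv2]
    rw [mul_left_comm, mul_inv_cancel₀ hu0, mul_one]; ring
  have hφ2 : φ (X 1 * X 3 - 1 - X 0 ^ b) = 0 := by
    rw [map_sub, map_sub, map_mul, map_pow, map_one, hφX, hφX, hφX, hv1, hv3, hv0]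
    rw [mul_left_comm, mul_inv_cancel₀ hw0, mul_one]; ring
  have hIker : Ideal.span ({X 0 * X 2 - 1 - X 1 ^ a, X 1 * X 3 - 1 - X 0 ^ b} :
      Set (MvPolynomial (Fin 4) K)) ≤ RingHom.ker φ := by
    rw [Ideal.span_le]
    rintro x (rfl | rfl)
    · exact hφ1
    · simpa using hφ2
  have hcomp : ∀ g : MvPolynomial (Fin 2) K,
      φ (emb2 K g) = algebraMap (MvPolynomial (Fin 2) K) F g := by
    intro g
    have : φ.comp (emb2 K).toRingHom = algebraMap (MvPolynomial (Fin 2) K) F := by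
      apply MvPolynomial.ringHom_ext
      · intro c
        rw [hφ]
        simp [emb2]
      · intro i
        rw [hφ]
        fin_cases i <;> simp [emb2] <;> rfl
    exact congrArg (fun ψ => ψ g) this
  have pow_mem : ∀ (N : ℕ) (f : MvPolynomial (Fin 4) K),
      (X 0 * X 1) ^ N * f ∈ Ideal.span ({X 0 * X 2 - 1 - X 1 ^ a, X 1 * X 3 - 1 - X 0 ^ b} :
        Set (MvPolynomial (Fin 4) K)) →
      f ∈ Ideal.span ({X 0 * X 2 - 1 - X 1 ^ a, X 1 * X 3 - 1 - X 0 ^ b} :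
        Set (MvPolynomial (Fin 4) K)) := by
    intro N
    induction N with
    | zero => intro f h; simpa using h
    | succ n ih =>
        intro f hmem
        have h1 : (X 0 * X 1 : MvPolynomial (Fin 4) K) ^ n * (X 0 * (X 1 * f)) ∈
            Ideal.span ({X 0 * X 2 - 1 - X 1 ^ a, X 1 * X 3 - 1 - X 0 ^ b} :
              Set (MvPolynomial (Fin 4) K)) := by
          have heq : (X 0 * X 1 : MvPolynomial (Fin 4) K) ^ n * (X 0 * (X 1 * f)) =
              (X 0 * X 1) ^ (n + 1) * f := by ring
          rw [heq]; exact hmem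
        have h2 := ih _ h1
        have h3 := nzd0 a b ha hb (X 1 * f) h2
        exact nzd1 a b ha hb f h3
  have hkerI : RingHom.ker φ ≤ Ideal.span ({X 0 * X 2 - 1 - X 1 ^ a, X 1 * X 3 - 1 - X 0 ^ b} :
      Set (MvPolynomial (Fin 4) K)) := by
    intro f hf
    rw [RingHom.mem_ker] at hf
    obtain ⟨N, g, h, hIh, e⟩ := reduce (K := K) a b f
    have hφe := congrArg φ e
    rw [map_mul, map_pow, map_mul, hφX, hφX, hv0, hv1, hf, mul_zero, map_add, hcomp,
      hIker hIh, add_zero] at hφe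
    have hg0 : g = 0 := hinj (by rw [← hφe, map_zero])
    rw [hg0, map_zero, zero_add] at e
    exact pow_mem N f (e ▸ hIh)
  have hEq : Ideal.span ({X 0 * X 2 - 1 - X 1 ^ a, X 1 * X 3 - 1 - X 0 ^ b} :
      Set (MvPolynomial (Fin 4) K)) = RingHom.ker φ := le_antisymm hIker hkerI
  rw [hEq]
  exact RingHom.ker_isPrime φ
end

section
/- The image of uv (equivalently, of (uv − λ) + λ, i.e. of the element x + λ) in S is not a prime element of S, where S is the localization of the polynomial ring K[u,v] away from the element uv − λ. -/
open MvPolynomial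

lemma dvd_away_aux {R : Type*} [CommRing R] [IsDomain R] (s f g : R) (hs : s ≠ 0)
    (h : algebraMap R (Localization.Away s) f ∣ algebraMap R (Localization.Away s) g) :
    ∃ (n : ℕ) (r : R), g * s ^ n = f * r := by
  obtain ⟨t, ht⟩ := h
  obtain ⟨⟨r, m⟩, hm⟩ := IsLocalization.surj (Submonoid.powers s) t
  obtain ⟨n, hn⟩ := m.2
  refine ⟨n, r, ?_⟩
  have hinj : Function.Injective (algebraMap R (Localization.Away s)) :=
    IsLocalization.injective _ (powers_le_nonZeroDivisors_of_noZeroDivisors hs)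
  apply hinj
  have hn' : (m : R) = s ^ n := hn.symm
  rw [map_mul, map_mul, ht, ← hn', mul_assoc, hm]

/-- The image of `uv` (i.e. of the element `x + λ` under `x = uv − λ`) is not a prime
element of the localization `S` of `K[u,v]` away from `uv − λ`. -/
theorem stmt8 (K : Type*) [Field K] [IsAlgClosed K] [CharZero K]
    (l : K) (hl : l ≠ 0) :
    ¬ Prime (algebraMap (MvPolynomial (Fin 2) K)
      (Localization.Away ((X 0 * X 1 - C l : MvPolynomial (Fin 2) K))) (X 0 * X 1)) := by
  intro hp
  set s : MvPolynomial (Fin 2) K := X 0 * X 1 - C l with hs_def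
  have hs : s ≠ 0 := by
    intro h
    have := congrArg (eval (0 : Fin 2 → K)) h
    simp [hs_def] at this
    exact hl this
  have hd : algebraMap (MvPolynomial (Fin 2) K) (Localization.Away s) (X 0 * X 1) ∣
      algebraMap (MvPolynomial (Fin 2) K) (Localization.Away s) (X 0) *
      algebraMap (MvPolynomial (Fin 2) K) (Localization.Away s) (X 1) := by
    rw [← map_mul]
  rcases hp.2.2 _ _ hd with h | h
  · obtain ⟨n, r, heq⟩ := dvd_away_aux s _ _ hs h
    have := congrArg (eval (![1, 0] : Fin 2 → K)) heq
    simp [hs_def] at this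
    exact hl this.1
  · obtain ⟨n, r, heq⟩ := dvd_away_aux s _ _ hs h
    have := congrArg (eval (![0, 1] : Fin 2 → K)) heq
    simp [hs_def] at this
    exact hl this.1
end

section
/- Let F be the fraction field of the polynomial ring K[x,y] and let R ⊂ F be the K-subalgebra generated by x, x⁻¹, y, and (x+λ₁)(x+λ₂)/y. Then for every nonzero integer n, the element ((x+λ₁)/y)^n does not belong to R. -/
open MvPolynomial

/-- Let `F` be the fraction field of `K[x,y]` and let `R ⊂ F` be the `K`-subalgebra
generated by `x`, `x⁻¹`, `y` and `(x+λ₁)(x+λ₂)/y`. Then for every nonzero integer `n`,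
the element `((x+λ₁)/y)^n` does not belong to `R`. -/
theorem stmt10 (K : Type*) [Field K] [IsAlgClosed K] [CharZero K]
    (l₁ l₂ : K) (hl₁ : l₁ ≠ 0) (hl₂ : l₂ ≠ 0) (hne : l₁ ≠ l₂)
    (F : Type*) [Field F] [Algebra (MvPolynomial (Fin 2) K) F]
    [IsFractionRing (MvPolynomial (Fin 2) K) F]
    [Algebra K F] [IsScalarTower K (MvPolynomial (Fin 2) K) F]
    (x y : F)
    (hx : x = algebraMap (MvPolynomial (Fin 2) K) F (X 0))
    (hy : y = algebraMap (MvPolynomial (Fin 2) K) F (X 1))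
    (n : ℤ) (hn : n ≠ 0) :
    ((x + algebraMap K F l₁) / y) ^ n ∉
      Algebra.adjoin K
        {x, x⁻¹, y, (x + algebraMap K F l₁) * (x + algebraMap K F l₂) / y} := by
  intro hmem
  set A := MvPolynomial (Fin 2) K with hA
  have hinj : Function.Injective (algebraMap A F) := IsFractionRing.injective A F
  have halg : ∀ k : K, algebraMap K F k = algebraMap A F (C k) := by
    intro k
    rw [IsScalarTower.algebraMap_apply K A F, MvPolynomial.algebraMap_eq]
  -- nonvanishing facts
  have hxA : (X 0 : A) ≠ 0 := X_ne_zero 0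
  have hyA : (X 1 : A) ≠ 0 := X_ne_zero 1
  have hx0 : x ≠ 0 := by
    rw [hx]; exact fun h => hxA (hinj (by simpa using h))
  have hy0 : y ≠ 0 := by
    rw [hy]; exact fun h => hyA (hinj (by simpa using h))
  have hx1A : (X 0 + C l₁ : A) ≠ 0 := by
    intro h
    have := congrArg (eval ![1 - l₁, 0]) h
    simp at this
  have hx10 : x + algebraMap K F l₁ ≠ 0 := by
    rw [hx, halg, ← map_add]
    exact fun h => hx1A (hinj (by simpa using h))
  -- the key ideal
  set I : Ideal A := Ideal.span {X 1, (X 0 + C l₁) * (X 0 + C l₂)} with hI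
  have hX1I : (X 1 : A) ∈ I := Ideal.subset_span (by simp)
  have hPI : ((X 0 + C l₁) * (X 0 + C l₂) : A) ∈ I := Ideal.subset_span (by simp)
  -- structure of elements of the adjoin
  have key : ∀ r ∈ Algebra.adjoin K
      {x, x⁻¹, y, (x + algebraMap K F l₁) * (x + algebraMap K F l₂) / y},
      ∃ (a b : ℕ) (f : A), f ∈ I ^ b ∧ r * x ^ a * y ^ b = algebraMap A F f := by
    intro r hr
    induction hr using Algebra.adjoin_induction with
    | mem r hr =>
      simp only [Set.mem_insert_iff, Set.mem_singleton_iff] at hr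
      rcases hr with rfl | rfl | rfl | rfl
      · exact ⟨0, 0, X 0, by simp [Ideal.one_eq_top], by simp [hx]; rfl⟩
      · refine ⟨1, 0, 1, by simp [Ideal.one_eq_top], ?_⟩
        simp [inv_mul_cancel₀ hx0]
      · exact ⟨0, 0, X 1, by simp [Ideal.one_eq_top], by simp [hy]; rfl⟩
      · refine ⟨0, 1, (X 0 + C l₁) * (X 0 + C l₂), by simpa using hPI, ?_⟩
        rw [pow_zero, mul_one, pow_one, div_mul_cancel₀ _ hy0]
        simp [hx, halg, map_add, map_mul]; rfl
    | algebraMap k =>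
      exact ⟨0, 0, C k, by simp [Ideal.one_eq_top], by simp [halg k]⟩
    | add r s hr hs ihr ihs =>
      obtain ⟨a₁, b₁, f₁, hf₁, e₁⟩ := ihr
      obtain ⟨a₂, b₂, f₂, hf₂, e₂⟩ := ihs
      refine ⟨a₁ + a₂, b₁ + b₂,
        f₁ * (X 0 ^ a₂ * X 1 ^ b₂) + f₂ * (X 0 ^ a₁ * X 1 ^ b₁), ?_, ?_⟩
      · apply Ideal.add_mem
        · have h1 : f₁ * X 1 ^ b₂ ∈ I ^ (b₁ + b₂) := by
            rw [pow_add]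
            exact Ideal.mul_mem_mul hf₁ (Ideal.pow_mem_pow hX1I b₂)
          have h2 := Ideal.mul_mem_right (X 0 ^ a₂) _ h1
          rwa [show f₁ * X 1 ^ b₂ * X 0 ^ a₂ = f₁ * (X 0 ^ a₂ * X 1 ^ b₂) from by ring] at h2
        · have h1 : f₂ * X 1 ^ b₁ ∈ I ^ (b₁ + b₂) := by
            rw [add_comm b₁ b₂, pow_add]
            exact Ideal.mul_mem_mul hf₂ (Ideal.pow_mem_pow hX1I b₁)
          have h2 := Ideal.mul_mem_right (X 0 ^ a₁) _ h1
          rwa [show f₂ * X 1 ^ b₁ * X 0 ^ a₁ = f₂ * (X 0 ^ a₁ * X 1 ^ b₁) from by ring] at h2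
      · have hmap : algebraMap A F (f₁ * (X 0 ^ a₂ * X 1 ^ b₂) + f₂ * (X 0 ^ a₁ * X 1 ^ b₁))
            = algebraMap A F f₁ * x ^ a₂ * y ^ b₂ + algebraMap A F f₂ * x ^ a₁ * y ^ b₁ := by
          simp only [map_add, map_mul, map_pow, hx, hy]
          ring
        rw [hmap, ← e₁, ← e₂]
        ring
    | mul r s hr hs ihr ihs =>
      obtain ⟨a₁, b₁, f₁, hf₁, e₁⟩ := ihr
      obtain ⟨a₂, b₂, f₂, hf₂, e₂⟩ := ihs
      refine ⟨a₁ + a₂, b₁ + b₂, f₁ * f₂, ?_, ?_⟩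
      · rw [pow_add]; exact Ideal.mul_mem_mul hf₁ hf₂
      · rw [map_mul, ← e₁, ← e₂]
        ring
  obtain ⟨a, b, f, hf, heq⟩ := key _ hmem
  rcases hn.lt_or_gt with hneg | hpos
  · -- n < 0 : evaluate at X0 = -l₁
    obtain ⟨m, hm, rfl⟩ : ∃ m : ℕ, 0 < m ∧ n = -(m : ℤ) :=
      ⟨(-n).toNat, by omega, by omega⟩
    rw [zpow_neg, zpow_natCast, ← inv_pow, inv_div] at heq
    rw [div_pow, div_mul_eq_mul_div, div_mul_eq_mul_div,
      div_eq_iff (pow_ne_zero m hx10)] at heq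
    have hmap : algebraMap A F (X 1 ^ m * X 0 ^ a * X 1 ^ b)
        = algebraMap A F (f * (X 0 + C l₁) ^ m) := by
      simp only [map_mul, map_pow, map_add, ← hx, ← hy, ← halg]
      rw [hx, hy] at heq; exact heq
    have hAeq := hinj hmap
    have hev := congrArg (eval ![-l₁, 1]) hAeq
    simp only [map_mul, map_pow, map_add, eval_X, eval_C, Matrix.cons_val_zero,
      Matrix.cons_val_one, Matrix.head_cons, one_pow, neg_add_cancel,
      zero_pow hm.ne', mul_zero, mul_one, one_mul] at hev
    exact pow_ne_zero a (neg_ne_zero.mpr hl₁) hev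
  · -- n > 0 : monomial valuation at the point (-l₂, 0)
    obtain ⟨m, hm, rfl⟩ : ∃ m : ℕ, 0 < m ∧ n = (m : ℤ) :=
      ⟨n.toNat, by omega, by omega⟩
    rw [zpow_natCast] at heq
    rw [div_pow, div_mul_eq_mul_div, div_mul_eq_mul_div,
      div_eq_iff (pow_ne_zero m hy0)] at heq
    have hmap : algebraMap A F ((X 0 + C l₁) ^ m * X 0 ^ a * X 1 ^ b)
        = algebraMap A F (f * X 1 ^ m) := by
      simp only [map_mul, map_pow, map_add, ← hx, ← hy, ← halg]
      rw [hx, hy] at heq; exact heq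
    have hAeq : ((X 0 + C l₁) ^ m * X 0 ^ a * X 1 ^ b : A) = f * X 1 ^ m := hinj hmap
    -- the substitution X0 ↦ t*X0 - l₂, X1 ↦ t*X1, t = X2
    set B := MvPolynomial (Fin 3) K with hB
    set Φ : A →ₐ[K] B := aeval ![X 2 * X 0 - C l₂, X 2 * X 1] with hΦ
    have hΦ0 : Φ (X 0) = X 2 * X 0 - C l₂ := by rw [hΦ, aeval_X]; rfl
    have hΦ1 : Φ (X 1) = X 2 * X 1 := by rw [hΦ, aeval_X]; rfl
    have hΦC : ∀ k : K, Φ (C k) = C k := by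
      intro k; rw [hΦ, aeval_C]; rfl
    have hIle : Ideal.map (Φ : A →+* B) I ≤ Ideal.span {(X 2 : B)} := by
      rw [hI, Ideal.map_span, Ideal.span_le]
      rintro _ ⟨p, hp, rfl⟩
      simp only [Set.mem_insert_iff, Set.mem_singleton_iff] at hp
      rcases hp with rfl | rfl
      · rw [RingHom.coe_coe, hΦ1]
        exact Ideal.mem_span_singleton.mpr ⟨X 1, rfl⟩
      · rw [RingHom.coe_coe, map_mul, map_add, map_add, hΦ0, hΦC, hΦC]
        exact Ideal.mem_span_singleton.mpr
          ⟨(X 2 * X 0 - C l₂ + C l₁) * X 0, by ring⟩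
    have hfB : Φ f ∈ Ideal.span {(X 2 : B)} ^ b := by
      have h1 : (Φ : A →+* B) f ∈ Ideal.map (Φ : A →+* B) (I ^ b) :=
        Ideal.mem_map_of_mem _ hf
      rw [Ideal.map_pow] at h1
      exact Ideal.pow_right_mono hIle b h1
    rw [Ideal.span_singleton_pow, Ideal.mem_span_singleton] at hfB
    obtain ⟨g, hg⟩ := hfB
    have hBeq := congrArg Φ hAeq
    simp only [map_mul, map_pow, map_add, hΦ0, hΦ1, hΦC, hg] at hBeq
    have hcan : (X 2 * X 0 - C l₂ + C l₁) ^ m * (X 2 * X 0 - C l₂) ^ a * X 1 ^ b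
        = g * X 2 ^ m * X 1 ^ m := by
      have hc : (X 2 : B) ^ b ≠ 0 := pow_ne_zero _ (X_ne_zero 2)
      apply mul_left_cancel₀ hc
      linear_combination hBeq
    have hev := congrArg (eval ![(0 : K), 1, 0]) hcan
    simp only [map_mul, map_pow, map_sub, map_add, eval_X, eval_C, Matrix.cons_val_zero,
      Matrix.cons_val_one, Matrix.head_cons, Matrix.cons_val_two, Matrix.tail_cons,
      zero_mul, zero_sub, one_pow, mul_one, zero_pow hm.ne', mul_zero] at hev
    have h1 : (-l₂ + l₁ : K) ≠ 0 := by
      rw [neg_add_eq_sub]; exact sub_ne_zero.mpr hne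
    exact mul_ne_zero (pow_ne_zero _ h1) (pow_ne_zero _ (neg_ne_zero.mpr hl₂)) hev
end

section
/- In the ring C = K[T₁,…,T₁₁]/(T₆T₉ − T₁T₂T₇T₈ − T₅T₁₁, T₇T₁₀ − T₁T₄T₈² − T₃T₆T₁₁), the images of the nine variables T₁, T₂, T₃, T₄, T₅, T₆, T₇, T₈, T₁₁ are algebraically independent over K. -/
open MvPolynomial

/-- In the ring `C = K[T₁,…,T₁₁]/(T₆T₉ − T₁T₂T₇T₈ − T₅T₁₁, T₇T₁₀ − T₁T₄T₈² − T₃T₆T₁₁)`,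
the images of the nine variables `T₁, T₂, T₃, T₄, T₅, T₆, T₇, T₈, T₁₁` are algebraically
independent over `K`.  (Variables are indexed from `0`, so `Tᵢ = X (i-1)`.) -/
theorem stmt12 (K : Type*) [Field K] [IsAlgClosed K] [CharZero K] :
    AlgebraicIndependent K
      (fun i : Fin 9 =>
        Ideal.Quotient.mk
          (Ideal.span ({X 5 * X 8 - X 0 * X 1 * X 6 * X 7 - X 4 * X 10,
            X 6 * X 9 - X 0 * X 3 * X 7 ^ 2 - X 2 * X 5 * X 10} :
            Set (MvPolynomial (Fin 11) K)))
          (X ((![0, 1, 2, 3, 4, 5, 6, 7, 10] : Fin 9 → Fin 11) i))) := by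
  set I := Ideal.span ({X 5 * X 8 - X 0 * X 1 * X 6 * X 7 - X 4 * X 10,
            X 6 * X 9 - X 0 * X 3 * X 7 ^ 2 - X 2 * X 5 * X 10} :
            Set (MvPolynomial (Fin 11) K)) with hI
  let P := MvPolynomial (Fin 9) K
  let L := FractionRing P
  let x : Fin 9 → L := fun i => algebraMap P L (X i)
  have hinj : Function.Injective (algebraMap P L) := IsFractionRing.injective P L
  have hx5 : x 5 ≠ 0 :=
    (map_ne_zero_iff _ hinj).2 (MvPolynomial.X_ne_zero (5 : Fin 9))
  have hx6 : x 6 ≠ 0 :=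
    (map_ne_zero_iff _ hinj).2 (MvPolynomial.X_ne_zero (6 : Fin 9))
  let g : Fin 11 → L := ![x 0, x 1, x 2, x 3, x 4, x 5, x 6, x 7,
    (x 0 * x 1 * x 6 * x 7 + x 4 * x 8) / x 5,
    (x 0 * x 3 * x 7 ^ 2 + x 2 * x 5 * x 8) / x 6, x 8]
  let G : MvPolynomial (Fin 11) K →ₐ[K] L := aeval g
  have e0 : G (X 0) = x 0 := by rw [aeval_X]; rfl
  have e1 : G (X 1) = x 1 := by rw [aeval_X]; rfl
  have e2 : G (X 2) = x 2 := by rw [aeval_X]; rfl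
  have e3 : G (X 3) = x 3 := by rw [aeval_X]; rfl
  have e4 : G (X 4) = x 4 := by rw [aeval_X]; rfl
  have e5 : G (X 5) = x 5 := by rw [aeval_X]; rfl
  have e6 : G (X 6) = x 6 := by rw [aeval_X]; rfl
  have e7 : G (X 7) = x 7 := by rw [aeval_X]; rfl
  have e8 : G (X 8) = (x 0 * x 1 * x 6 * x 7 + x 4 * x 8) / x 5 := by rw [aeval_X]; rfl
  have e9 : G (X 9) = (x 0 * x 3 * x 7 ^ 2 + x 2 * x 5 * x 8) / x 6 := by rw [aeval_X]; rfl
  have e10 : G (X 10) = x 8 := by rw [aeval_X]; rfl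
  have hG : ∀ a ∈ I, G a = 0 := by
    have : I ≤ RingHom.ker G := by
      rw [hI, Ideal.span_le]
      rintro p (rfl | rfl) <;>
      · simp only [SetLike.mem_coe, RingHom.mem_ker, map_sub, map_mul, map_pow,
          e0, e1, e2, e3, e4, e5, e6, e7, e8, e9, e10]
        simp only [mul_div_cancel₀ _ hx5, mul_div_cancel₀ _ hx6]
        ring
    exact fun a ha => this ha
  let F : (MvPolynomial (Fin 11) K ⧸ I) →ₐ[K] L := Ideal.Quotient.liftₐ I G hG
  apply AlgebraicIndependent.of_comp F
  have hcomp : (F ∘ fun i : Fin 9 =>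
      Ideal.Quotient.mk I (X ((![0, 1, 2, 3, 4, 5, 6, 7, 10] : Fin 9 → Fin 11) i)))
      = fun i : Fin 9 => x i := by
    funext i
    show G (X ((![0, 1, 2, 3, 4, 5, 6, 7, 10] : Fin 9 → Fin 11) i)) = x i
    fin_cases i
    exacts [e0, e1, e2, e3, e4, e5, e6, e7, e10]
  rw [hcomp]
  have : (fun i : Fin 9 => x i)
      = (IsScalarTower.toAlgHom K P L : P →ₐ[K] L) ∘ (X : Fin 9 → P) := rfl
  rw [this]
  exact ((IsScalarTower.toAlgHom K P L).algebraicIndependent_iff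
    (IsFractionRing.injective P L)).2 (MvPolynomial.algebraicIndependent_X _ _)
end

section
/- Let C = K[T₁,…,T₁₁]/(T₆T₉ − T₁T₂T₇T₈ − T₅T₁₁, T₇T₁₀ − T₁T₄T₈² − T₃T₆T₁₁). The localization of C at the powers of the image of the product T₁T₂T₃T₄T₅T₆T₇T₈T₁₁ is isomorphic as a K-algebra to the Laurent polynomial ring in nine variables over K (the group algebra K[ℤ⁹]). -/
open MvPolynomial
noncomputable section StmtAux13
namespace StmtAux13
open AddMonoidAlgebra

set_option maxHeartbeats 1000000
set_option synthInstance.maxHeartbeats 200000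

variable (K : Type*) [Field K]

abbrev I13 : Ideal (MvPolynomial (Fin 11) K) :=
  Ideal.span ({X 5 * X 8 - X 0 * X 1 * X 6 * X 7 - X 4 * X 10,
      X 6 * X 9 - X 0 * X 3 * X 7 ^ 2 - X 2 * X 5 * X 10} : Set (MvPolynomial (Fin 11) K))

abbrev P13 : MvPolynomial (Fin 11) K :=
  X 0 * X 1 * X 2 * X 3 * X 4 * X 5 * X 6 * X 7 * X 10

abbrev Q13 := MvPolynomial (Fin 11) K ⧸ I13 K
abbrev q13 : MvPolynomial (Fin 11) K →+* Q13 K := Ideal.Quotient.mk (I13 K)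
abbrev L13 := AddMonoidAlgebra K (Fin 9 → ℤ)
abbrev Loc13 := Localization.Away (q13 K (P13 K))

def W : Multiplicative (Fin 9 → ℤ) →* (L13 K)ˣ :=
  MonoidHom.mk'
    (fun v => Units.mkOfMulEqOne (AddMonoidAlgebra.single v.toAdd (1 : K))
      (AddMonoidAlgebra.single (-v.toAdd) 1)
      (by rw [AddMonoidAlgebra.single_mul_single, add_neg_cancel, one_mul,
            AddMonoidAlgebra.one_def]))
    (fun a b => Units.ext (by
      simp [Units.val_mkOfMulEqOne, AddMonoidAlgebra.single_mul_single]))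

@[simp] lemma W_coe (v : Multiplicative (Fin 9 → ℤ)) :
    (W K v : L13 K) = AddMonoidAlgebra.single v.toAdd (1 : K) := rfl

def uK : Fin 9 → L13 K := fun i => (W K (.ofAdd (Pi.single i 1)) : L13 K)

def fvals : Fin 11 → L13 K :=
  ![uK K 0, uK K 1, uK K 2, uK K 3, uK K 4, uK K 5, uK K 6, uK K 7,
    (uK K 0 * uK K 1 * uK K 6 * uK K 7 + uK K 4 * uK K 8) *
      ((W K (.ofAdd (Pi.single 5 1)))⁻¹ : (L13 K)ˣ),
    (uK K 0 * uK K 3 * uK K 7 ^ 2 + uK K 2 * uK K 5 * uK K 8) *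
      ((W K (.ofAdd (Pi.single 6 1)))⁻¹ : (L13 K)ˣ),
    uK K 8]

@[simp] lemma fvals_0 : fvals K (0 : Fin 11) = uK K 0 := rfl
@[simp] lemma fvals_1 : fvals K (1 : Fin 11) = uK K 1 := rfl
@[simp] lemma fvals_2 : fvals K (2 : Fin 11) = uK K 2 := rfl
@[simp] lemma fvals_3 : fvals K (3 : Fin 11) = uK K 3 := rfl
@[simp] lemma fvals_4 : fvals K (4 : Fin 11) = uK K 4 := rfl
@[simp] lemma fvals_5 : fvals K (5 : Fin 11) = uK K 5 := rfl
@[simp] lemma fvals_6 : fvals K (6 : Fin 11) = uK K 6 := rfl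
@[simp] lemma fvals_7 : fvals K (7 : Fin 11) = uK K 7 := rfl
@[simp] lemma fvals_8 : fvals K (8 : Fin 11) = (uK K 0 * uK K 1 * uK K 6 * uK K 7 + uK K 4 * uK K 8) * ((W K (.ofAdd (Pi.single 5 1)))⁻¹ : (L13 K)ˣ) := rfl
@[simp] lemma fvals_9 : fvals K (9 : Fin 11) = (uK K 0 * uK K 3 * uK K 7 ^ 2 + uK K 2 * uK K 5 * uK K 8) * ((W K (.ofAdd (Pi.single 6 1)))⁻¹ : (L13 K)ˣ) := rfl
@[simp] lemma fvals_10 : fvals K (10 : Fin 11) = uK K 8 := rfl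

def phi0 : MvPolynomial (Fin 11) K →ₐ[K] L13 K := aeval (fvals K)

lemma phi0_ker : ∀ a ∈ I13 K, phi0 K a = 0 := by
  intro a ha
  have h : I13 K ≤ RingHom.ker (phi0 K) := by
    rw [Ideal.span_le]
    rintro p hp
    simp only [Set.mem_insert_iff, Set.mem_singleton_iff] at hp
    rcases hp with rfl | rfl <;>
    · simp only [SetLike.mem_coe, RingHom.mem_ker, phi0, map_sub, map_mul, map_pow, aeval_X,
        fvals_0, fvals_1, fvals_2, fvals_3, fvals_4, fvals_5, fvals_6, fvals_7,
        fvals_8, fvals_9, fvals_10]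
      have h5 : uK K 5 * ((W K (.ofAdd (Pi.single 5 1)))⁻¹ : (L13 K)ˣ) = 1 :=
        Units.mul_inv _
      have h6 : uK K 6 * ((W K (.ofAdd (Pi.single 6 1)))⁻¹ : (L13 K)ˣ) = 1 :=
        Units.mul_inv _
      first
      | linear_combination (uK K 0 * uK K 1 * uK K 6 * uK K 7 + uK K 4 * uK K 8) * h5
      | linear_combination (uK K 0 * uK K 3 * uK K 7 ^ 2 + uK K 2 * uK K 5 * uK K 8) * h6
  exact h ha

def phibar : Q13 K →ₐ[K] L13 K := Ideal.Quotient.liftₐ (I13 K) (phi0 K) (phi0_ker K)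

@[simp] lemma phibar_mk (p : MvPolynomial (Fin 11) K) :
    phibar K (q13 K p) = phi0 K p := by
  simp [phibar, Ideal.Quotient.liftₐ_apply, q13, Ideal.Quotient.lift_mk]
  rfl

lemma phibar_t_isUnit : IsUnit (phibar K (q13 K (P13 K))) := by
  have : phibar K (q13 K (P13 K)) =
      ((W K (.ofAdd (Pi.single 0 1)) * W K (.ofAdd (Pi.single 1 1)) *
        W K (.ofAdd (Pi.single 2 1)) * W K (.ofAdd (Pi.single 3 1)) *
        W K (.ofAdd (Pi.single 4 1)) * W K (.ofAdd (Pi.single 5 1)) *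
        W K (.ofAdd (Pi.single 6 1)) * W K (.ofAdd (Pi.single 7 1)) *
        W K (.ofAdd (Pi.single 8 1)) : (L13 K)ˣ) : L13 K) := by
    simp only [phibar_mk, phi0, P13, map_mul, aeval_X,
      fvals_0, fvals_1, fvals_2, fvals_3, fvals_4, fvals_5, fvals_6, fvals_7, fvals_10, uK]
    push_cast
    ring
  rw [this]
  exact Units.isUnit _

lemma phibar_pows : ∀ y : Submonoid.powers (q13 K (P13 K)), IsUnit (phibar K y) := by
  rintro ⟨y, n, rfl⟩
  simpa [map_pow] using (phibar_t_isUnit K).pow n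

def phi : Loc13 K →ₐ[K] L13 K :=
  IsLocalization.liftAlgHom (M := Submonoid.powers (q13 K (P13 K))) (S := Loc13 K) (phibar_pows K)

lemma phi_algebraMap (x : Q13 K) :
    phi K (algebraMap (Q13 K) (Loc13 K) x) = phibar K x := by
  simp [phi, IsLocalization.liftAlgHom_apply, IsLocalization.lift_eq]


def sigma : Fin 9 → Fin 11 := ![0, 1, 2, 3, 4, 5, 6, 7, 10]

@[simp] lemma sigma_0 : sigma 0 = 0 := rfl
@[simp] lemma sigma_1 : sigma 1 = 1 := rfl
@[simp] lemma sigma_2 : sigma 2 = 2 := rfl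
@[simp] lemma sigma_3 : sigma 3 = 3 := rfl
@[simp] lemma sigma_4 : sigma 4 = 4 := rfl
@[simp] lemma sigma_5 : sigma 5 = 5 := rfl
@[simp] lemma sigma_6 : sigma 6 = 6 := rfl
@[simp] lemma sigma_7 : sigma 7 = 7 := rfl
@[simp] lemma sigma_8 : sigma 8 = 10 := rfl

lemma hu : ∀ i : Fin 9, IsUnit (algebraMap (Q13 K) (Loc13 K) (q13 K (X (sigma i)))) := by
  have key : ∀ (j : Fin 11) (r : MvPolynomial (Fin 11) K), X j * r = P13 K →
      IsUnit (algebraMap (Q13 K) (Loc13 K) (q13 K (X j))) := by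
    intro j r hr
    have h : IsUnit (algebraMap (Q13 K) (Loc13 K) (q13 K (X j) * q13 K r)) := by
      have h0 : q13 K (X j) * q13 K r = q13 K (P13 K) := by
        rw [← map_mul, hr]
      rw [h0]
      exact IsLocalization.Away.algebraMap_isUnit (S := Loc13 K) (q13 K (P13 K))
    simp only [map_mul] at h
    exact isUnit_of_mul_isUnit_left h
  intro i
  fin_cases i
  · exact key 0 (X 1*X 2*X 3*X 4*X 5*X 6*X 7*X 10) (by ring)
  · exact key 1 (X 0*X 2*X 3*X 4*X 5*X 6*X 7*X 10) (by ring)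
  · exact key 2 (X 0*X 1*X 3*X 4*X 5*X 6*X 7*X 10) (by ring)
  · exact key 3 (X 0*X 1*X 2*X 4*X 5*X 6*X 7*X 10) (by ring)
  · exact key 4 (X 0*X 1*X 2*X 3*X 5*X 6*X 7*X 10) (by ring)
  · exact key 5 (X 0*X 1*X 2*X 3*X 4*X 6*X 7*X 10) (by ring)
  · exact key 6 (X 0*X 1*X 2*X 3*X 4*X 5*X 7*X 10) (by ring)
  · exact key 7 (X 0*X 1*X 2*X 3*X 4*X 5*X 6*X 10) (by ring)
  · exact key 10 (X 0*X 1*X 2*X 3*X 4*X 5*X 6*X 7) (by ring)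

def G : Multiplicative (Fin 9 → ℤ) →* (Loc13 K)ˣ :=
  MonoidHom.mk' (fun v => ∏ i, (hu K i).unit ^ (v.toAdd i))
    (by
      intro a b
      simp [toAdd_mul, Pi.add_apply, zpow_add, Finset.prod_mul_distrib])

def psi : L13 K →ₐ[K] Loc13 K :=
  AddMonoidAlgebra.lift K (Loc13 K) (Fin 9 → ℤ) ((Units.coeHom (Loc13 K)).comp (G K))

lemma psi_single (v : Fin 9 → ℤ) :
    psi K (AddMonoidAlgebra.single v (1 : K)) = ((G K (.ofAdd v) : (Loc13 K)ˣ) : Loc13 K) := by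
  simp [psi, AddMonoidAlgebra.lift_single]

lemma prod_single_zpow {M : Type*} [CommGroup M] (w : Fin 9 → M) (k : Fin 9) (n : ℤ) :
    ∏ j, w j ^ ((Pi.single k n : Fin 9 → ℤ) j) = w k ^ n := by
  rw [Finset.prod_eq_single k]
  · rw [Pi.single_eq_same]
  · intro b _ hb
    rw [Pi.single_eq_of_ne hb, zpow_zero]
  · intro h
    exact absurd (Finset.mem_univ k) h

lemma G_single (k : Fin 9) (n : ℤ) :
    G K (.ofAdd (Pi.single k n)) = (hu K k).unit ^ n := by
  show ∏ j, (hu K j).unit ^ _ = _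
  exact prod_single_zpow _ k n

lemma psi_u (k : Fin 9) :
    psi K (uK K k) = algebraMap (Q13 K) (Loc13 K) (q13 K (X (sigma k))) := by
  have h : uK K k = AddMonoidAlgebra.single (Pi.single k 1) (1 : K) := rfl
  rw [h, psi_single, G_single, zpow_one, IsUnit.unit_spec]

lemma W_eq_prod (v : Fin 9 → ℤ) :
    W K (.ofAdd v) = ∏ i, (W K (.ofAdd (Pi.single i 1))) ^ (v i) := by
  conv_lhs => rw [← Finset.univ_sum_single v, ofAdd_sum, map_prod]
  refine Finset.prod_congr rfl fun i _ => ?_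
  have h : Pi.single i (v i) = v i • (Pi.single i (1 : ℤ) : Fin 9 → ℤ) := by
    ext j
    rcases eq_or_ne j i with rfl | hj
    · simp
    · simp [Pi.single_eq_of_ne hj]
  rw [h, ofAdd_zsmul, map_zpow]

lemma unit_map_phi (i : Fin 9) :
    Units.map (phi K : Loc13 K →* L13 K) ((hu K i).unit) = W K (.ofAdd (Pi.single i 1)) := by
  refine Units.ext ?_
  rw [Units.coe_map, IsUnit.unit_spec]
  show phi K (algebraMap (Q13 K) (Loc13 K) (q13 K (X (sigma i)))) = _
  rw [phi_algebraMap, phibar_mk]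
  show aeval (fvals K) (X (sigma i)) = _
  rw [aeval_X]
  fin_cases i <;> rfl

lemma comp1 : (phi K).comp (psi K) = AlgHom.id K (L13 K) := by
  apply AddMonoidAlgebra.algHom_ext
  intro v
  have hmap : Units.map (phi K : Loc13 K →* L13 K) (G K (.ofAdd v)) = W K (.ofAdd v) := by
    rw [W_eq_prod]
    show Units.map (phi K : Loc13 K →* L13 K) (∏ i, (hu K i).unit ^ (v i)) = _
    rw [map_prod]
    exact Finset.prod_congr rfl fun i _ => by rw [map_zpow, unit_map_phi]
  calc (phi K).comp (psi K) (AddMonoidAlgebra.single v 1)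
      = phi K ((G K (.ofAdd v) : (Loc13 K)ˣ) : Loc13 K) := by
        rw [AlgHom.comp_apply, psi_single]
    _ = ((Units.map (phi K : Loc13 K →* L13 K) (G K (.ofAdd v)) : (L13 K)ˣ) : L13 K) := by
        rw [Units.coe_map]; rfl
    _ = AddMonoidAlgebra.single v 1 := by rw [hmap]; rfl
  · exact Subsingleton.elim _ _


lemma psi_winv (k : Fin 9) :
    psi K (((W K (.ofAdd (Pi.single k 1)))⁻¹ : (L13 K)ˣ) : L13 K)
      = (((hu K k).unit⁻¹ : (Loc13 K)ˣ) : Loc13 K) := by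
  have h1 : ((W K (.ofAdd (Pi.single k 1)))⁻¹ : (L13 K)ˣ)
      = W K (.ofAdd (Pi.single k (-1))) := by
    rw [← map_inv]
    congr 1
    rw [← ofAdd_neg]
    congr 1
    ext j
    rcases eq_or_ne j k with rfl | hj
    · simp
    · simp [Pi.single_eq_of_ne hj]
  rw [h1]
  have h2 : ((W K (.ofAdd (Pi.single k (-1))) : (L13 K)ˣ) : L13 K)
      = AddMonoidAlgebra.single (Pi.single k (-1)) (1 : K) := rfl
  rw [h2, psi_single, G_single, zpow_neg_one]

lemma mk_C (k : K) : q13 K (C k) = algebraMap K (Q13 K) k := rfl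

lemma comp2 : (psi K).comp (phi K) = AlgHom.id K (Loc13 K) := by
  apply AlgHom.coe_ringHom_injective
  refine IsLocalization.ringHom_ext (R := Q13 K) (S := Loc13 K) (P := Loc13 K)
    (Submonoid.powers (q13 K (P13 K))) ?_
  refine Ideal.Quotient.ringHom_ext ?_
  apply MvPolynomial.ringHom_ext
  · intro k
    simp only [RingHom.comp_apply]
    show psi K (phi K (algebraMap (Q13 K) (Loc13 K) (q13 K (C k))))
      = algebraMap (Q13 K) (Loc13 K) (q13 K (C k))
    rw [mk_C, ← IsScalarTower.algebraMap_apply K (Q13 K) (Loc13 K),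
      (phi K).commutes, (psi K).commutes]
  · intro i
    simp only [RingHom.comp_apply]
    show psi K (phi K (algebraMap (Q13 K) (Loc13 K) (q13 K (X i))))
      = algebraMap (Q13 K) (Loc13 K) (q13 K (X i))
    rw [phi_algebraMap, phibar_mk]
    show psi K (aeval (fvals K) (X i)) = _
    rw [aeval_X]
    fin_cases i
    · exact psi_u K 0
    · exact psi_u K 1
    · exact psi_u K 2
    · exact psi_u K 3
    · exact psi_u K 4
    · exact psi_u K 5
    · exact psi_u K 6
    · exact psi_u K 7
    · -- X 8 case
      show psi K (fvals K 8) = _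
      rw [fvals_8]
      simp only [map_mul, map_add, psi_u, psi_winv, sigma_0, sigma_1, sigma_4, sigma_5,
        sigma_6, sigma_7, sigma_8]
      rw [Units.mul_inv_eq_iff_eq_mul, IsUnit.unit_spec]
      have h : q13 K (X 0 * X 1 * X 6 * X 7 + X 4 * X 10)
          = q13 K (X 8 * X (sigma 5)) := by
        rw [Ideal.Quotient.eq]
        have hg : (X 5 * X 8 - X 0 * X 1 * X 6 * X 7 - X 4 * X 10 :
            MvPolynomial (Fin 11) K) ∈ I13 K :=
          Ideal.subset_span (Set.mem_insert _ _)
        have hn := (I13 K).neg_mem hg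
        convert hn using 1
        simp only [sigma_5]
        ring
      have := congrArg (algebraMap (Q13 K) (Loc13 K)) h
      simp only [map_add, map_mul, sigma_5] at this
      exact this
    · -- X 9 case
      show psi K (fvals K 9) = _
      rw [fvals_9]
      simp only [map_mul, map_add, map_pow, psi_u, psi_winv, sigma_0, sigma_2, sigma_3,
        sigma_5, sigma_6, sigma_7, sigma_8]
      rw [Units.mul_inv_eq_iff_eq_mul, IsUnit.unit_spec]
      have h : q13 K (X 0 * X 3 * X 7 ^ 2 + X 2 * X 5 * X 10)
          = q13 K (X 9 * X (sigma 6)) := by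
        rw [Ideal.Quotient.eq]
        have hg : (X 6 * X 9 - X 0 * X 3 * X 7 ^ 2 - X 2 * X 5 * X 10 :
            MvPolynomial (Fin 11) K) ∈ I13 K :=
          Ideal.subset_span (Set.mem_insert_of_mem _ rfl)
        have hn := (I13 K).neg_mem hg
        convert hn using 1
        simp only [sigma_6]
        ring
      have := congrArg (algebraMap (Q13 K) (Loc13 K)) h
      simp only [map_add, map_mul, map_pow, sigma_6] at this
      exact this
    · exact psi_u K 8

end StmtAux13

end StmtAux13

open StmtAux13 in
/-- Let `C = K[T₁,…,T₁₁]/(T₆T₉ − T₁T₂T₇T₈ − T₅T₁₁, T₇T₁₀ − T₁T₄T₈² − T₃T₆T₁₁)`.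
The localization of `C` at the powers of the image of `T₁T₂T₃T₄T₅T₆T₇T₈T₁₁` is
isomorphic as a `K`-algebra to the Laurent polynomial ring in nine variables over `K`,
i.e. to the group algebra `K[ℤ⁹]`.  (Variables are indexed from `0`, so `Tᵢ = X (i-1)`.) -/
theorem stmt13 (K : Type*) [Field K] [IsAlgClosed K] [CharZero K] :
    Nonempty
      ((Localization.Away
          (Ideal.Quotient.mk
            (Ideal.span ({X 5 * X 8 - X 0 * X 1 * X 6 * X 7 - X 4 * X 10,
              X 6 * X 9 - X 0 * X 3 * X 7 ^ 2 - X 2 * X 5 * X 10} :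
              Set (MvPolynomial (Fin 11) K)))
            (X 0 * X 1 * X 2 * X 3 * X 4 * X 5 * X 6 * X 7 * X 10))) ≃ₐ[K]
        AddMonoidAlgebra K (Fin 9 → ℤ)) :=
  ⟨AlgEquiv.ofAlgHom (phi K) (psi K) (comp1 K) (comp2 K)⟩
end
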